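/- Let G be a graph that is an obstruction for S_k (G does not embed in S_k but every G - e does), and suppose for every edge e = uv of G, G - e has an embedding Π_e in S_k with a face where x and y alternate, and in which u and v are not cofacial. Then G has an embedding in S_{k+1} with a face where x and y alternate. -/

import Mathlib

open SimpleGraph

namespace AltPaper

variable {V : Type*} {W : Type*} {U : Type*}

/-- The dart-reversal permutation of a graph. -/
def dartRev (G : SimpleGraph V) : Equiv.Perm G.Dart :=
  Function.Involutive.toPerm SimpleGraph.Dart.symm SimpleGraph.Dart.symm_involutive

/-- A combinatorial embedding of `G` into an orientable surface, given by a rotation system: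
a permutation of the darts whose orbits are exactly the stars of the vertices. -/
structure RotSys (G : SimpleGraph V) where
  rot : Equiv.Perm G.Dart
  fst_rot : ∀ d : G.Dart, (rot d).fst = d.fst
  orbit_full : ∀ d d' : G.Dart, d.fst = d'.fst → ∃ n : ℕ, (rot ^ n) d = d'

namespace RotSys

variable {G : SimpleGraph V}

/-- The face-tracing permutation of the rotation system. -/
def facePerm (R : RotSys G) : Equiv.Perm G.Dart := (dartRev G).trans R.rot

/-- The number of faces of the embedding: the number of orbits of the face permutation. -/
noncomputable def numFaces (R : RotSys G) : ℕ :=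
  Nat.card (MulAction.orbitRel.Quotient (Subgroup.zpowers R.facePerm) G.Dart)

/-- The number of non-isolated vertices: orbits of the rotation. -/
noncomputable def numVerts (R : RotSys G) : ℕ :=
  Nat.card (MulAction.orbitRel.Quotient (Subgroup.zpowers R.rot) G.Dart)

/-- The number of connected components containing at least one edge. -/
noncomputable def numComps (R : RotSys G) : ℕ :=
  Nat.card (MulAction.orbitRel.Quotient (Subgroup.closure {R.rot, dartRev G}) G.Dart)

/-- By Euler's formula, the (total, orientable) genus of the embedding `R` is at most `k`.
Isolated vertices are irrelevant for the genus and are ignored. -/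
noncomputable def genusLE (R : RotSys G) (k : ℕ) : Prop :=
  2 * R.numComps + Nat.card G.edgeSet ≤ 2 * k + R.numFaces + R.numVerts

/-- Vertices `v₁ v₂ v₃ v₄` appear (in this cyclic order) on a common face of `R`. -/
def cyclicOrderedFace (R : RotSys G) (v₁ v₂ v₃ v₄ : V) : Prop :=
  ∃ (d : G.Dart) (a b c : ℕ), 0 < a ∧ a < b ∧ b < c ∧
    c < Function.minimalPeriod (⇑R.facePerm) d ∧
    d.fst = v₁ ∧ ((R.facePerm ^ a) d).fst = v₂ ∧ ((R.facePerm ^ b) d).fst = v₃ ∧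
    ((R.facePerm ^ c) d).fst = v₄

/-- There is a face of `R` in which `x` and `y` appear (at least) twice, in the alternating
cyclic order `x, y, x, y`. -/
def altFace (R : RotSys G) (x y : V) : Prop := R.cyclicOrderedFace x y x y

/-- `u` and `v` lie on a common face of `R`. -/
def Cofacial (R : RotSys G) (u v : V) : Prop :=
  ∃ (d : G.Dart) (n : ℕ), d.fst = u ∧ ((R.facePerm ^ n) d).fst = v

/-- All vertices of `s` lie on a common face of `R`. -/
def CofacialSet (R : RotSys G) (s : Set V) : Prop :=
  ∃ d : G.Dart, ∀ v ∈ s, ∃ n : ℕ, ((R.facePerm ^ n) d).fst = v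

end RotSys

/-- `G` embeds in the orientable surface of genus `k`. -/
def GenusLE (G : SimpleGraph V) (k : ℕ) : Prop := ∃ R : RotSys G, R.genusLE k

/-- `G` has an embedding in the orientable surface of genus `k` with a face in which the
vertices `x` and `y` appear twice, in alternating cyclic order. -/
def AltEmb (G : SimpleGraph V) (x y : V) (k : ℕ) : Prop :=
  ∃ R : RotSys G, R.genusLE k ∧ R.altFace x y

end AltPaper
namespace AltPaper

variable {V : Type*} {W : Type*} {U : Type*}

/-- A combinatorial embedding of `G` into a (possibly non-orientable) surface:
a rotation system together with a signature on the edges. -/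
structure SRS (G : SimpleGraph V) where
  rot : Equiv.Perm G.Dart
  fst_rot : ∀ d : G.Dart, (rot d).fst = d.fst
  orbit_full : ∀ d d' : G.Dart, d.fst = d'.fst → ∃ n : ℕ, (rot ^ n) d = d'
  sign : Sym2 V → Bool

namespace SRS

variable {G : SimpleGraph V}

/-- Auxiliary involution used in signed face tracing: reverse the dart and update the side. -/
def flip (S : SRS G) : Equiv.Perm (G.Dart × Bool) :=
  Function.Involutive.toPerm (fun p => (p.1.symm, xor p.2 (S.sign p.1.edge)))
    (by
      rintro ⟨d, s⟩
      have h1 : d.symm.symm = d := SimpleGraph.Dart.symm_involutive d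
      have h2 : d.symm.edge = d.edge := SimpleGraph.Dart.edge_symm d
      simp [h1, h2, Bool.xor_assoc])

/-- Auxiliary permutation used in signed face tracing: apply the rotation forwards or
backwards according to the current side. -/
def rotPm (S : SRS G) : Equiv.Perm (G.Dart × Bool) where
  toFun p := (cond p.2 (S.rot p.1) (S.rot.symm p.1), p.2)
  invFun p := (cond p.2 (S.rot.symm p.1) (S.rot p.1), p.2)
  left_inv := by rintro ⟨d, (_ | _)⟩ <;> simp
  right_inv := by rintro ⟨d, (_ | _)⟩ <;> simp

/-- The signed face-tracing permutation, acting on sided darts. -/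
def facePerm (S : SRS G) : Equiv.Perm (G.Dart × Bool) := (S.flip).trans (S.rotPm)

/-- Twice the number of faces (each face is traced once on each side). -/
noncomputable def numFaces2 (S : SRS G) : ℕ :=
  Nat.card (MulAction.orbitRel.Quotient (Subgroup.zpowers S.facePerm) (G.Dart × Bool))

noncomputable def numVerts (S : SRS G) : ℕ :=
  Nat.card (MulAction.orbitRel.Quotient (Subgroup.zpowers S.rot) G.Dart)

noncomputable def numComps (S : SRS G) : ℕ :=
  Nat.card (MulAction.orbitRel.Quotient (Subgroup.closure {S.rot, dartRev G}) G.Dart)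

/-- Twice the (total) Euler genus of the embedding, via Euler's formula. -/
noncomputable def eulerGenus2 (S : SRS G) : ℤ :=
  4 * S.numComps - 2 * S.numVerts + 2 * Nat.card G.edgeSet - S.numFaces2

/-- The Euler genus of the embedding is at most `h`. -/
noncomputable def eulerGenusLE (S : SRS G) (h : ℕ) : Prop := S.eulerGenus2 ≤ 2 * h

/-- The sided darts `p` and `q` lie on the same face. -/
def SameFace (S : SRS G) (p q : G.Dart × Bool) : Prop := ∃ n : ℤ, (S.facePerm ^ n) p = q

/-- The set of darts of the facial walk of the face of `p`. -/
def faceDarts (S : SRS G) (p : G.Dart × Bool) : Set G.Dart :=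
  {d | ∃ q, S.SameFace p q ∧ q.1 = d}

/-- The vertex `v` appears on the facial walk of the face of `p`. -/
def vertexOnFace (S : SRS G) (p : G.Dart × Bool) (v : V) : Prop :=
  ∃ d ∈ S.faceDarts p, d.fst = v

/-- The facial walk of the face of `p` visits `x` and `y` in alternating cyclic order
`x, y, x, y`. -/
def altFaceS (S : SRS G) (p : G.Dart × Bool) (x y : V) : Prop :=
  ∃ (a b c : ℕ), 0 < a ∧ a < b ∧ b < c ∧
    c < Function.minimalPeriod (⇑S.facePerm) p ∧
    p.1.fst = x ∧ ((S.facePerm ^ a) p).1.fst = y ∧ ((S.facePerm ^ b) p).1.fst = x ∧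
    ((S.facePerm ^ c) p).1.fst = y

end SRS

/-- `G` embeds in the projective plane. -/
def ProjPlanar (G : SimpleGraph V) : Prop := ∃ S : SRS G, S.eulerGenusLE 1

end AltPaper
namespace AltPaper

variable {V : Type*} {W : Type*} {U : Type*}

/-! ### The multigraph obtained by identifying two vertices, and its planar embeddings -/

/-- The darts of the multigraph `Ĥ` obtained from `G` by identifying `x` and `y`
(deleting the edge `xy` first, if present). -/
def PD (G : SimpleGraph V) (x y : V) : Type _ := {d : G.Dart // d.edge ≠ s(x, y)}

/-- The source vertex of a dart of `Ĥ`: the identified vertex `v_{xy}` is represented by `x`. -/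
def psrc (G : SimpleGraph V) (x y : V) [DecidableEq V] (d : PD G x y) : V :=
  if d.val.fst = y then x else d.val.fst

/-- Dart reversal in `Ĥ`. -/
def prev (G : SimpleGraph V) (x y : V) : Equiv.Perm (PD G x y) :=
  Function.Involutive.toPerm
    (fun d => ⟨d.val.symm, by rw [SimpleGraph.Dart.edge_symm]; exact d.prop⟩)
    (by
      rintro ⟨d, hd⟩
      exact Subtype.ext (SimpleGraph.Dart.symm_involutive d))

/-- A combinatorial embedding (in an orientable surface) of the multigraph `Ĥ` obtained from
`G` by identifying `x` and `y` into the vertex `v_{xy}` (loops are discarded). -/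
structure PinchRS (G : SimpleGraph V) (x y : V) [DecidableEq V] where
  rot : Equiv.Perm (PD G x y)
  src_rot : ∀ d, psrc G x y (rot d) = psrc G x y d
  orbit_full : ∀ d d', psrc G x y d = psrc G x y d' → ∃ n : ℕ, (rot ^ n) d = d'

namespace PinchRS

variable [DecidableEq V] {G : SimpleGraph V} {x y : V}

def facePerm (P : PinchRS G x y) : Equiv.Perm (PD G x y) := (prev G x y).trans P.rot

noncomputable def numFaces (P : PinchRS G x y) : ℕ :=
  Nat.card (MulAction.orbitRel.Quotient (Subgroup.zpowers P.facePerm) (PD G x y))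

noncomputable def numVerts (P : PinchRS G x y) : ℕ :=
  Nat.card (MulAction.orbitRel.Quotient (Subgroup.zpowers P.rot) (PD G x y))

noncomputable def numComps (P : PinchRS G x y) : ℕ :=
  Nat.card (MulAction.orbitRel.Quotient (Subgroup.closure {P.rot, prev G x y}) (PD G x y))

/-- The embedding `P` of `Ĥ` is planar (Euler's formula; the dart count is twice the
edge count). -/
noncomputable def Planar (P : PinchRS G x y) : Prop :=
  4 * P.numComps + Nat.card (PD G x y) ≤ 2 * P.numFaces + 2 * P.numVerts

/-- The number of label transitions in the cyclic sequence of labels around the identified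
vertex `v_{xy}`: a dart incident with `v_{xy}` is labelled `X` when it comes from `x`. -/
noncomputable def pinchTrans (P : PinchRS G x y) : ℕ :=
  Nat.card {d : PD G x y // psrc G x y d = x ∧
    ¬ ((d.val.fst = x) ↔ ((P.rot d).val.fst = x))}

end PinchRS

/-! ### Splitting the two terminals -/

/-- The projection recording that `Sum.inr false` is the second copy of `x` and
`Sum.inr true` is the second copy of `y` (while `Sum.inl x`, `Sum.inl y` are the first
copies). -/
def splitProj (x y : V) : V ⊕ Bool → V
  | Sum.inl v => v
  | Sum.inr false => x
  | Sum.inr true => y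

/-- `G'` is obtained from `G` by splitting `x` into `x₁ = Sum.inl x`, `x₂ = Sum.inr false`
and `y` into `y₁ = Sum.inl y`, `y₂ = Sum.inr true`, distributing the incident edges. -/
def IsSplitAt (G : SimpleGraph V) (x y : V) (G' : SimpleGraph (V ⊕ Bool)) : Prop :=
  (∀ a b, G'.Adj a b → G.Adj (splitProj x y a) (splitProj x y b)) ∧
  (∀ u v, G.Adj u v → ∃ a b, G'.Adj a b ∧ splitProj x y a = u ∧ splitProj x y b = v) ∧
  (∀ a b a' b', G'.Adj a b → G'.Adj a' b' →
    splitProj x y a = splitProj x y a' → splitProj x y b = splitProj x y b' → a = a' ∧ b = b')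

/-- The simple graph `G/xy` obtained from `G` by identifying `x` and `y` (the edge `xy`,
if present, is deleted first, and multiple edges are merged); the merged vertex is `x`,
and `y` becomes isolated. -/
def pinch (G : SimpleGraph V) (x y : V) : SimpleGraph V :=
  SimpleGraph.fromRel (fun a b => a ≠ y ∧ b ≠ y ∧
    ∃ a' b', G.Adj a' b' ∧ (a' = a ∨ (a' = y ∧ a = x)) ∧ (b' = b ∨ (b' = y ∧ b = x)))

/-- The graph `G*`: the `xy`-sum of `G` with a copy of `K₅` minus an edge, the two ends of
the deleted edge being identified with `x` and `y`. -/
def Gstar (G : SimpleGraph V) (x y : V) : SimpleGraph (V ⊕ Fin 3) :=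
  SimpleGraph.fromRel (fun a b =>
    (∃ u v, a = Sum.inl u ∧ b = Sum.inl v ∧ G.Adj u v) ∨
    (∃ i j : Fin 3, a = Sum.inr i ∧ b = Sum.inr j) ∨
    (∃ i : Fin 3, a = Sum.inr i ∧ (b = Sum.inl x ∨ b = Sum.inl y)))

/-- The two-terminal graph corresponding to an `XY`-labelled graph `H`:
add the terminal `x = Sum.inr false` joined to all `X`-labelled vertices and the terminal
`y = Sum.inr true` joined to all `Y`-labelled vertices. -/
def termGraph (H : SimpleGraph W) (lX lY : W → Prop) : SimpleGraph (W ⊕ Bool) :=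
  SimpleGraph.fromRel (fun a b =>
    (∃ u v, a = Sum.inl u ∧ b = Sum.inl v ∧ H.Adj u v) ∨
    (∃ u, a = Sum.inr false ∧ b = Sum.inl u ∧ lX u) ∨
    (∃ u, a = Sum.inr true ∧ b = Sum.inl u ∧ lY u))

/-- Identification map used for `xy`-sums: `w₁ ↦ u₁`, `w₂ ↦ u₂`. -/
def sumRho [DecidableEq W] (u₁ u₂ : U) (w₁ w₂ : W) : W → U ⊕ W := fun w =>
  if w = w₁ then Sum.inl u₁ else if w = w₂ then Sum.inl u₂ else Sum.inr w

/-- The `xy`-sum of `H₁` (with terminals `u₁, u₂`) and `H₂` (with terminals `w₁, w₂`):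
their union after identifying `u₁` with `w₁` and `u₂` with `w₂`; the edge between the two
identified vertices is deleted even if present in a summand. -/
def xySum [DecidableEq W] (H₁ : SimpleGraph U) (u₁ u₂ : U)
    (H₂ : SimpleGraph W) (w₁ w₂ : W) : SimpleGraph (U ⊕ W) :=
  SimpleGraph.fromRel (fun p q => s(p, q) ≠ s(Sum.inl u₁, Sum.inl u₂) ∧
    ((∃ a b, p = Sum.inl a ∧ q = Sum.inl b ∧ H₁.Adj a b) ∨
     (∃ a b, H₂.Adj a b ∧ p = sumRho u₁ u₂ w₁ w₂ a ∧ q = sumRho u₁ u₂ w₁ w₂ b)))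

/-! ### Subdivisions -/

/-- A subdivision of `K` contained in `G`: branch vertices are given by the injection `f`,
branches are internally disjoint paths avoiding the branch vertices. -/
structure SubdivisionEmb (K : SimpleGraph U) (G : SimpleGraph V) where
  f : U → V
  inj : Function.Injective f
  walk : ∀ {a b : U}, K.Adj a b → G.Walk (f a) (f b)
  isPath : ∀ {a b : U} (h : K.Adj a b), (walk h).IsPath
  symmCompat : ∀ {a b : U} (h : K.Adj a b), walk h.symm = (walk h).reverse
  internal_disj : ∀ {a b c d : U} (h₁ : K.Adj a b) (h₂ : K.Adj c d), s(a, b) ≠ s(c, d) →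
    ∀ v, v ∈ (walk h₁).support → v ∈ (walk h₂).support →
      (v = f a ∨ v = f b) ∧ (v = f c ∨ v = f d)
  branch_only : ∀ {a b : U} (h : K.Adj a b) (u : U), f u ∈ (walk h).support → u = a ∨ u = b

/-- The set of vertices of the subdivision. -/
def SubSupport {K : SimpleGraph U} {G : SimpleGraph V} (s : SubdivisionEmb K G) : Set V :=
  {v | ∃ (a b : U) (h : K.Adj a b), v ∈ (s.walk h).support}

/-- The set of edges of the subdivision. -/
def SubEdges {K : SimpleGraph U} {G : SimpleGraph V} (s : SubdivisionEmb K G) : Set (Sym2 V) :=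
  {e | ∃ (a b : U) (h : K.Adj a b), e ∈ (s.walk h).edges}

/-! ### Blocks -/

/-- `B` is a block of `H`: a maximal connected vertex set without cutvertex. -/
def IsBlock (H : SimpleGraph W) (B : Set W) : Prop :=
  B.Nonempty ∧ (H.induce B).Preconnected ∧ (∀ v : W, (H.induce (B \ {v})).Preconnected) ∧
  ∀ B' : Set W, B ⊆ B' →
    ((H.induce B').Preconnected ∧ ∀ v : W, (H.induce (B' \ {v})).Preconnected) → B' = B

/-! ### Bridges of a cycle -/

/-- The `C`-bridge generated by a set `K` of vertices (the component) : `K` together with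
all edges leaving `K` and their endpoints. -/
def bridgeOf (G : SimpleGraph V) (K : Set V) : G.Subgraph where
  verts := K ∪ {v | ∃ u ∈ K, G.Adj u v}
  Adj a b := G.Adj a b ∧ (a ∈ K ∨ b ∈ K)
  adj_sub h := h.1
  edge_vert := by
    rintro a b ⟨h, ha | hb⟩
    · exact Or.inl ha
    · exact Or.inr ⟨b, hb, h.symm⟩
  symm := by
    constructor
    rintro a b ⟨h, hab⟩
    exact ⟨h.symm, hab.symm⟩

/-- `B` is a `C`-bridge in `G`, for a closed walk `C`: either a chord of `C`, or a connected
component of `G - V(C)` together with all edges joining it to `C`. -/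
def IsCBridge {r : V} (G : SimpleGraph V) (C : G.Walk r r) (B : G.Subgraph) : Prop :=
  (∃ (a b : V) (h : G.Adj a b), a ∈ C.support ∧ b ∈ C.support ∧ s(a, b) ∉ C.edges ∧
      B = G.subgraphOfAdj h) ∨
  (∃ c : (G.induce {v | v ∉ C.support}).ConnectedComponent,
      B = bridgeOf G (Subtype.val '' c.supp))

/-- The attachments of a `C`-bridge `B`. -/
def attachments {G : SimpleGraph V} {r : V} (C : G.Walk r r) (B : G.Subgraph) : Set V :=
  B.verts ∩ {v | v ∈ C.support}

/-- The vertex set of the segment `C[u,v]` of the closed walk `C` from `u` to `v` (in the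
orientation of `C`). -/
def segSet [DecidableEq V] {r : V} (G : SimpleGraph V) (C : G.Walk r r) (u v : V) : Set V :=
  {w | ∃ (hu : u ∈ C.support) (hv : v ∈ (C.rotate u hu).support),
    w ∈ ((C.rotate u hu).takeUntil v hv).support}

/-- Two `C`-bridges avoid each other. -/
def Avoid [DecidableEq V] {r : V} (G : SimpleGraph V) (C : G.Walk r r)
    (B₁ B₂ : G.Subgraph) : Prop :=
  ∃ u v, u ∈ C.support ∧ v ∈ C.support ∧
    attachments C B₁ ⊆ segSet G C u v ∧ attachments C B₂ ⊆ segSet G C v u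

/-- Two `C`-bridges overlap. -/
def Overlap [DecidableEq V] {r : V} (G : SimpleGraph V) (C : G.Walk r r)
    (B₁ B₂ : G.Subgraph) : Prop := ¬ Avoid G C B₁ B₂

/-! ### The classes `A^k_{xy}` and their obstructions -/

/-- Contraction of the edge `uv` of `G`: `v` is merged into `u` (and becomes isolated). -/
def contractEdge (G : SimpleGraph V) (u v : V) : SimpleGraph V :=
  SimpleGraph.fromRel (fun a b => a ≠ v ∧ b ≠ v ∧
    (G.Adj a b ∨ (a = u ∧ G.Adj v b) ∨ (b = u ∧ G.Adj a v)))

/-- The class `A^k_{xy}`: `G` embeds in the orientable surface of genus `k-1`, or `G` is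
`xy`-alternating on the orientable surface of genus `k`. -/
def Akxy (G : SimpleGraph V) (x y : V) (k : ℕ) : Prop :=
  GenusLE G (k - 1) ∨ AltEmb G x y k

/-- `G` (with terminals `x, y`) is an obstruction for the class `A^k_{xy}`: it is not in the
class, but every deletion and every allowed contraction (one which does not identify the two
terminals) is. -/
def MinimalNotAk (G : SimpleGraph V) (x y : V) (k : ℕ) : Prop :=
  ¬ Akxy G x y k ∧
  (∀ e ∈ G.edgeSet, Akxy (G.deleteEdges {e}) x y k) ∧
  (∀ u v, G.Adj u v → v ≠ x → v ≠ y → Akxy (contractEdge G u v) x y k)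

/-! ### Cyclic label sequences -/

/-- The number of transitions between consecutive entries of a list. -/
def listTrans (w : List Bool) : ℕ := ((w.zip w.tail).filter (fun p => p.1 ≠ p.2)).length

/-- The number of transitions of a list, viewed as a cyclic sequence. -/
def cycTrans : List Bool → ℕ
  | [] => 0
  | a :: t => listTrans ((a :: t) ++ [a])

/-- The cyclic sequence of labelled vertices (labels are subsets of `{X, Y}`, with
`true = X`, `false = Y`) contains six distinct vertices, in this cyclic order or its
reverse, whose labels contain `X, Y, X, Y, X, Y` respectively. -/
def HasXYXYXY (n : ℕ) (lab : ZMod (n + 1) → Finset Bool) : Prop :=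
  ∃ (s : ZMod (n + 1)) (a : Fin 6 → ℕ) (ε : Bool), StrictMono a ∧ a 5 ≤ n ∧
    ∀ k : Fin 6, (decide (k.val % 2 = 0)) ∈
      lab (s + (if ε then ((a k : ℕ) : ZMod (n + 1)) else -((a k : ℕ) : ZMod (n + 1))))

/-- `L` arranges the labels of each vertex of the cyclic sequence into a list (each label
used exactly once). -/
def IsArrangement (n : ℕ) (lab : ZMod (n + 1) → Finset Bool)
    (L : ZMod (n + 1) → List Bool) : Prop :=
  ∀ i, (L i).Nodup ∧ (L i).toFinset = lab i

/-- The cyclic label sequence obtained by concatenating the arranged labels in the cyclic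
order of the vertices. -/
def arranged (n : ℕ) (L : ZMod (n + 1) → List Bool) : List Bool :=
  (List.ofFn (fun j : Fin (n + 1) => L ((j : ℕ) : ZMod (n + 1)))).flatten

end AltPaper

open Function Equiv
set_option linter.unusedSectionVars false

theorem Equiv.Perm.apply_inv_self {α : Type*} (f : Equiv.Perm α) (x : α) : f (f⁻¹ x) = x :=
  f.apply_symm_apply x

theorem Equiv.Perm.inv_apply_self {α : Type*} (f : Equiv.Perm α) (x : α) : f⁻¹ (f x) = x :=
  f.symm_apply_apply x

namespace AltHelp

variable {α : Type*}

/-- iterate equality along an injection -/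
lemma conj_pow {β : Type*} (f : Perm α) (g : Perm β) (φ : α → β)
    (h : ∀ z, g (φ z) = φ (f z)) : ∀ (n : ℕ) (z), (g ^ n) (φ z) = φ ((f ^ n) z) := by
  intro n
  induction n with
  | zero => simp
  | succ n ih =>
    intro z
    rw [pow_succ', pow_succ', Perm.mul_apply, Perm.mul_apply, ih, h]

lemma conj_inv {β : Type*} (f : Perm α) (g : Perm β) (φ : α → β)
    (h : ∀ z, g (φ z) = φ (f z)) : ∀ z, g⁻¹ (φ z) = φ (f⁻¹ z) := by
  intro z
  have : g (φ (f⁻¹ z)) = φ z := by rw [h, Perm.apply_inv_self]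
  rw [← this, Perm.inv_apply_self]

lemma conj_zpow {β : Type*} (f : Perm α) (g : Perm β) (φ : α → β)
    (h : ∀ z, g (φ z) = φ (f z)) : ∀ (n : ℤ) (z), (g ^ n) (φ z) = φ ((f ^ n) z) := by
  intro n z
  cases n with
  | ofNat m => simpa using conj_pow f g φ h m z
  | negSucc m =>
    rw [zpow_negSucc, zpow_negSucc]
    exact conj_pow f⁻¹ g⁻¹ φ (conj_inv f g φ h) (m+1) z

lemma mp_eq_of_iff {β : Type*} {f : α → α} {g : β → β} {x : α} {y : β}
    (h : ∀ n, Function.IsPeriodicPt f n x ↔ Function.IsPeriodicPt g n y) :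
    Function.minimalPeriod f x = Function.minimalPeriod g y := by
  by_cases hx : x ∈ Function.periodicPts f
  · have hy : y ∈ Function.periodicPts g := by
      obtain ⟨n, hn, hp⟩ := hx
      exact ⟨n, hn, (h n).1 hp⟩
    have h1 : Function.minimalPeriod f x ≤ Function.minimalPeriod g y :=
      Function.IsPeriodicPt.minimalPeriod_le
        (Function.minimalPeriod_pos_of_mem_periodicPts hy)
        ((h _).2 (Function.isPeriodicPt_minimalPeriod g y))
    have h2 : Function.minimalPeriod g y ≤ Function.minimalPeriod f x :=
      Function.IsPeriodicPt.minimalPeriod_le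
        (Function.minimalPeriod_pos_of_mem_periodicPts hx)
        ((h _).1 (Function.isPeriodicPt_minimalPeriod f x))
    omega
  · have hy : y ∉ Function.periodicPts g := by
      intro ⟨n, hn, hp⟩
      exact hx ⟨n, hn, (h n).2 hp⟩
    rw [Function.minimalPeriod_eq_zero_of_notMem_periodicPts hx,
      Function.minimalPeriod_eq_zero_of_notMem_periodicPts hy]

lemma mp_eq_of_pow_eq {π π' : Perm α} {x : α}
    (h : ∀ n : ℕ, (π' ^ n) x = (π ^ n) x) :
    Function.minimalPeriod (⇑π') x = Function.minimalPeriod (⇑π) x := by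
  apply mp_eq_of_iff
  intro n
  unfold Function.IsPeriodicPt Function.IsFixedPt
  rw [← Perm.coe_pow, ← Perm.coe_pow, h]

variable [Finite α]

lemma mp_pos (π : Perm α) (x : α) : 0 < Function.minimalPeriod (⇑π) x := by
  have h : Function.IsPeriodicPt (⇑π) (orderOf π) x := by
    unfold Function.IsPeriodicPt Function.IsFixedPt
    rw [← Perm.coe_pow, pow_orderOf_eq_one]
    rfl
  exact h.minimalPeriod_pos (orderOf_pos π)

lemma pow_mp (π : Perm α) (x : α) : (π ^ (Function.minimalPeriod (⇑π) x)) x = x := by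
  rw [Perm.coe_pow]; exact Function.iterate_minimalPeriod

lemma pow_mod_mp (π : Perm α) (x : α) (n : ℕ) :
    (π ^ (n % Function.minimalPeriod (⇑π) x)) x = (π ^ n) x := by
  rw [Perm.coe_pow, Perm.coe_pow]; exact Function.iterate_mod_minimalPeriod_eq

lemma pow_inj_mp (π : Perm α) (x : α) {a b : ℕ}
    (ha : a < Function.minimalPeriod (⇑π) x) (hb : b < Function.minimalPeriod (⇑π) x)
    (h : (π ^ a) x = (π ^ b) x) : a = b := by
  have := Function.iterate_injOn_Iio_minimalPeriod (f := ⇑π) (x := x) ha hb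
  simp only at this
  rw [← Perm.coe_pow, ← Perm.coe_pow] at this
  exact this h

lemma pow_apply_comm (π : Perm α) (n : ℕ) (x : α) : (π ^ n) (π x) = π ((π ^ n) x) := by
  rw [← Perm.mul_apply, ← Perm.mul_apply, ← pow_succ, ← pow_succ']

/-- the forward orbit -/
def orbN (π : Perm α) (x : α) : Set α := {y | ∃ n : ℕ, (π ^ n) x = y}

lemma self_mem_orbN (π : Perm α) (x : α) : x ∈ orbN π x := ⟨0, rfl⟩

lemma orbN_apply_mem (π : Perm α) {x y : α} (h : y ∈ orbN π x) : π y ∈ orbN π x := by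
  obtain ⟨n, rfl⟩ := h
  exact ⟨n + 1, by rw [pow_succ', Perm.mul_apply]⟩

lemma orbN_inv_mem (π : Perm α) {x y : α} (h : y ∈ orbN π x) : π⁻¹ y ∈ orbN π x := by
  obtain ⟨n, rfl⟩ := h
  refine ⟨n + (Function.minimalPeriod (⇑π) x - 1), ?_⟩
  have hp := mp_pos π x
  have : (π ^ (n + (Function.minimalPeriod (⇑π) x - 1) + 1)) x = (π ^ n) x := by
    have : n + (Function.minimalPeriod (⇑π) x - 1) + 1
        = n + Function.minimalPeriod (⇑π) x := by omega
    rw [this, pow_add, Perm.mul_apply, pow_mp]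
  have h2 : π ((π ^ (n + (Function.minimalPeriod (⇑π) x - 1))) x) = (π ^ n) x := by
    rw [← this, pow_succ', Perm.mul_apply]
  rw [← h2, Perm.inv_apply_self]

lemma orbN_trans (π : Perm α) {x y z : α} (h : y ∈ orbN π x) (h2 : z ∈ orbN π y) :
    z ∈ orbN π x := by
  obtain ⟨n, rfl⟩ := h; obtain ⟨m, rfl⟩ := h2
  exact ⟨n + m, by rw [add_comm, pow_add, Perm.mul_apply]⟩

lemma orbN_symm (π : Perm α) {x y : α} (h : y ∈ orbN π x) : x ∈ orbN π y := by
  obtain ⟨n, rfl⟩ := h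
  induction n with
  | zero => exact ⟨0, rfl⟩
  | succ n ih =>
    have : (π ^ (n+1)) x = π ((π^n) x) := by rw [pow_succ', Perm.mul_apply]
    rw [this]
    obtain ⟨m, hm⟩ := ih
    refine orbN_trans π ?_ ⟨m, hm⟩
    have := orbN_inv_mem π (self_mem_orbN π (π ((π^n) x)))
    rwa [Perm.inv_apply_self] at this

lemma orbN_disjoint (π : Perm α) {x y : α} (h : y ∉ orbN π x) :
    ∀ z, z ∈ orbN π y → z ∉ orbN π x := by
  intro z hz hx
  exact h (orbN_trans π hx (orbN_symm π hz))

/-- orbit relation for zpowers equals forward orbit membership -/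
lemma orbitRel_iff_orbN (π : Perm α) (x y : α) :
    (MulAction.orbitRel (Subgroup.zpowers π) α) x y ↔ x ∈ orbN π y := by
  rw [MulAction.orbitRel_apply]
  constructor
  · rintro ⟨⟨g, hg⟩, rfl⟩
    obtain ⟨m, rfl⟩ := Subgroup.mem_zpowers_iff.1 hg
    have : (π ^ (m % (orderOf π : ℤ))) = π ^ m := zpow_mod_orderOf π m
    have hnn : 0 ≤ m % (orderOf π : ℤ) :=
      Int.emod_nonneg m (by exact_mod_cast (orderOf_pos π).ne')
    refine ⟨(m % (orderOf π : ℤ)).toNat, ?_⟩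
    have h2 : (π ^ ((m % (orderOf π : ℤ)).toNat : ℤ)) = π ^ m := by
      rw [Int.toNat_of_nonneg hnn]; exact this
    rw [← zpow_natCast, h2]; rfl
  · rintro ⟨n, rfl⟩
    refine ⟨⟨π ^ (n:ℤ), Subgroup.mem_zpowers_iff.2 ⟨n, rfl⟩⟩, ?_⟩
    show (π ^ (n:ℤ)) _ = _
    rw [zpow_natCast]

section Part2
variable {α : Type*} [Finite α]

open MulAction

lemma clq_eq_iff (π : Equiv.Perm α) (x y : α) :
    (Quotient.mk'' x : MulAction.orbitRel.Quotient (Subgroup.zpowers π) α) = Quotient.mk'' y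
      ↔ x ∈ orbN π y := by
  rw [Quotient.eq'']
  exact orbitRel_iff_orbN π x y

lemma orbN_eq (π : Equiv.Perm α) {x y : α} (h : y ∈ orbN π x) : orbN π x = orbN π y := by
  ext z
  exact ⟨fun hz => orbN_trans π (orbN_symm π h) hz, fun hz => orbN_trans π h hz⟩

lemma card_orbQ_le_of_maps {β : Type*} [Finite β] (π : Equiv.Perm α) (g : α → β)
    (hwd : ∀ x y, x ∈ orbN π y → g x = g y)
    (hinj : ∀ x y, g x = g y → x ∈ orbN π y) :
    Nat.card (MulAction.orbitRel.Quotient (Subgroup.zpowers π) α) ≤ Nat.card β := by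
  have : ∀ (x y : α), (MulAction.orbitRel (Subgroup.zpowers π) α) x y → g x = g y := by
    intro x y h
    exact hwd x y ((orbitRel_iff_orbN π x y).1 h)
  refine Nat.card_le_card_of_injective (Quotient.lift g this) ?_
  intro q q'
  induction q using Quotient.ind
  induction q' using Quotient.ind
  intro h
  exact (clq_eq_iff π _ _).2 (hinj _ _ h)

/-- every orbit of π is inside an orbit of π'  ⇒ card of π'-quotient ≤ card of π-quotient -/
lemma card_orbQ_le_of_rel (π π' : Equiv.Perm α)
    (h : ∀ x y, x ∈ orbN π y → x ∈ orbN π' y) :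
    Nat.card (MulAction.orbitRel.Quotient (Subgroup.zpowers π') α) ≤
      Nat.card (MulAction.orbitRel.Quotient (Subgroup.zpowers π) α) := by
  have hfin : Finite (MulAction.orbitRel.Quotient (Subgroup.zpowers π') α) := Quotient.finite _
  have hfin2 : Finite (MulAction.orbitRel.Quotient (Subgroup.zpowers π) α) := Quotient.finite _
  have hwd : ∀ (x y : α), (MulAction.orbitRel (Subgroup.zpowers π) α) x y →
      (Quotient.mk'' x : MulAction.orbitRel.Quotient (Subgroup.zpowers π') α)
        = Quotient.mk'' y := by
    intro x y hxy
    exact (clq_eq_iff π' x y).2 (h x y ((orbitRel_iff_orbN π x y).1 hxy))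
  have hsurj : Function.Surjective
      (Quotient.lift (fun x => (Quotient.mk'' x :
        MulAction.orbitRel.Quotient (Subgroup.zpowers π') α)) hwd) := by
    intro q
    induction q using Quotient.ind with
    | _ x => exact ⟨Quotient.mk'' x, rfl⟩
  exact Nat.card_le_card_of_surjective _ hsurj

/-- strict version, given a collision -/
lemma card_orbQ_lt_of_rel (π π' : Equiv.Perm α)
    (h : ∀ x y, x ∈ orbN π y → x ∈ orbN π' y) (w w' : α)
    (hne : w ∉ orbN π w') (hrel : w ∈ orbN π' w') :
    Nat.card (MulAction.orbitRel.Quotient (Subgroup.zpowers π') α) + 1 ≤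
      Nat.card (MulAction.orbitRel.Quotient (Subgroup.zpowers π) α) := by
  have hfin : Finite (MulAction.orbitRel.Quotient (Subgroup.zpowers π') α) := Quotient.finite _
  have hfin2 : Finite (MulAction.orbitRel.Quotient (Subgroup.zpowers π) α) := Quotient.finite _
  have hwd : ∀ (x y : α), (MulAction.orbitRel (Subgroup.zpowers π) α) x y →
      (Quotient.mk'' x : MulAction.orbitRel.Quotient (Subgroup.zpowers π') α)
        = Quotient.mk'' y := by
    intro x y hxy
    exact (clq_eq_iff π' x y).2 (h x y ((orbitRel_iff_orbN π x y).1 hxy))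
  set f := Quotient.lift (fun x => (Quotient.mk'' x :
      MulAction.orbitRel.Quotient (Subgroup.zpowers π') α)) hwd with hf
  have hsurj : Function.Surjective f := by
    intro q
    induction q using Quotient.ind with
    | _ x => exact ⟨Quotient.mk'' x, rfl⟩
  have hninj : ¬ Function.Injective f := by
    intro hinj
    have h1 : f (Quotient.mk'' w) = f (Quotient.mk'' w') := by
      show (Quotient.mk'' w : MulAction.orbitRel.Quotient (Subgroup.zpowers π') α)
        = Quotient.mk'' w'
      exact (clq_eq_iff π' w w').2 hrel
    have := hinj h1
    exact hne ((clq_eq_iff π w w').1 this)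
  have := Fintype.ofFinite (MulAction.orbitRel.Quotient (Subgroup.zpowers π) α)
  have := Fintype.ofFinite (MulAction.orbitRel.Quotient (Subgroup.zpowers π') α)
  have hlt := Fintype.card_lt_of_surjective_not_injective f hsurj hninj
  rw [Fintype.card_eq_nat_card, Fintype.card_eq_nat_card] at hlt
  exact Nat.succ_le_of_lt hlt

/-- multiplying by a transposition on the left decreases the orbit count by at most one -/
lemma card_orbQ_le_swap_mul [DecidableEq α] (π : Equiv.Perm α) (a b : α) :
    Nat.card (MulAction.orbitRel.Quotient (Subgroup.zpowers π) α) ≤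
      Nat.card (MulAction.orbitRel.Quotient
        (Subgroup.zpowers (Equiv.swap a b * π)) α) + 1 := by
  classical
  set π' := Equiv.swap a b * π with hπ'
  have hstep : ∀ x, a ∉ orbN π x → b ∉ orbN π x → ∀ n : ℕ, (π' ^ n) x = (π ^ n) x := by
    intro x ha hb n
    induction n with
    | zero => rfl
    | succ n ih =>
      rw [pow_succ', pow_succ', Equiv.Perm.mul_apply, Equiv.Perm.mul_apply, ih]
      show (Equiv.swap a b * π) _ = _
      rw [Equiv.Perm.mul_apply]
      have hmem : π ((π ^ n) x) ∈ orbN π x := orbN_apply_mem π ⟨n, rfl⟩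
      exact Equiv.swap_apply_of_ne_of_ne (fun h => ha (h ▸ hmem)) (fun h => hb (h ▸ hmem))
  have hsub : ∀ x, a ∉ orbN π x → b ∉ orbN π x → orbN π' x ⊆ orbN π x := by
    rintro x ha hb z ⟨n, rfl⟩
    rw [hstep x ha hb n]
    exact ⟨n, rfl⟩
  have hrel' : ∀ x y, x ∈ orbN π y → a ∉ orbN π y → b ∉ orbN π y → x ∈ orbN π' y := by
    rintro x y ⟨n, rfl⟩ ha hb
    exact ⟨n, hstep y ha hb n⟩
  have hQ'fin : Finite (MulAction.orbitRel.Quotient (Subgroup.zpowers π') α) :=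
    Quotient.finite _
  have key : Nat.card (MulAction.orbitRel.Quotient (Subgroup.zpowers π) α) ≤
      Nat.card ((MulAction.orbitRel.Quotient (Subgroup.zpowers π') α) ⊕ Unit) := by
    by_cases hab : a ∈ orbN π b
    · -- a and b in the same π-orbit
      refine card_orbQ_le_of_maps π
        (fun x => if a ∉ orbN π x ∧ b ∉ orbN π x then
          Sum.inl (Quotient.mk'' x) else Sum.inr ()) ?_ ?_
      · intro x y h
        have he' : orbN π x = orbN π y := (orbN_eq π h).symm
        by_cases hg : a ∉ orbN π y ∧ b ∉ orbN π y
        · rw [if_pos (by rw [he']; exact hg), if_pos hg]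
          exact congrArg _ ((clq_eq_iff π' x y).2 (hrel' x y h hg.1 hg.2))
        · rw [if_neg (by rw [he']; exact hg), if_neg hg]
      · intro x y h
        by_cases hgx : a ∉ orbN π x ∧ b ∉ orbN π x
        · by_cases hgy : a ∉ orbN π y ∧ b ∉ orbN π y
          · rw [if_pos hgx, if_pos hgy] at h
            exact hsub y hgy.1 hgy.2 ((clq_eq_iff π' x y).1 (Sum.inl.inj h))
          · rw [if_pos hgx, if_neg hgy] at h
            exact absurd h (by simp)
        · by_cases hgy : a ∉ orbN π y ∧ b ∉ orbN π y
          · rw [if_neg hgx, if_pos hgy] at h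
            exact absurd h (by simp)
          · have hax : a ∈ orbN π x := by
              by_contra hax
              have hbx : b ∈ orbN π x := by by_contra hbx; exact hgx ⟨hax, hbx⟩
              exact hax (orbN_trans π hbx hab)
            have hay : a ∈ orbN π y := by
              by_contra hay
              have hby : b ∈ orbN π y := by by_contra hby; exact hgy ⟨hay, hby⟩
              exact hay (orbN_trans π hby hab)
            exact orbN_trans π hay (orbN_symm π hax)
    · -- a and b in different π-orbits
      refine card_orbQ_le_of_maps π
        (fun x => if a ∉ orbN π x ∧ b ∉ orbN π x then Sum.inl (Quotient.mk'' x)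
          else if a ∈ orbN π x then Sum.inl (Quotient.mk'' a) else Sum.inr ()) ?_ ?_
      · intro x y h
        have he' : orbN π x = orbN π y := (orbN_eq π h).symm
        by_cases hg : a ∉ orbN π y ∧ b ∉ orbN π y
        · rw [if_pos (by rw [he']; exact hg), if_pos hg]
          exact congrArg _ ((clq_eq_iff π' x y).2 (hrel' x y h hg.1 hg.2))
        · rw [if_neg (by rw [he']; exact hg), if_neg hg]
          by_cases hax : a ∈ orbN π y
          · rw [if_pos (by rw [he']; exact hax), if_pos hax]
          · rw [if_neg (by rw [he']; exact hax), if_neg hax]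
      · intro x y h
        by_cases hgx : a ∉ orbN π x ∧ b ∉ orbN π x
        · rw [if_pos hgx] at h
          by_cases hgy : a ∉ orbN π y ∧ b ∉ orbN π y
          · rw [if_pos hgy] at h
            exact hsub y hgy.1 hgy.2 ((clq_eq_iff π' x y).1 (Sum.inl.inj h))
          · rw [if_neg hgy] at h
            by_cases hay : a ∈ orbN π y
            · rw [if_pos hay] at h
              have h2 := (clq_eq_iff π' x a).1 (Sum.inl.inj h)
              exact absurd (hsub x hgx.1 hgx.2 (orbN_symm π' h2)) hgx.1
            · rw [if_neg hay] at h
              exact absurd h (by simp)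
        · rw [if_neg hgx] at h
          by_cases hgy : a ∉ orbN π y ∧ b ∉ orbN π y
          · rw [if_pos hgy] at h
            by_cases hax : a ∈ orbN π x
            · rw [if_pos hax] at h
              have h2 := (clq_eq_iff π' y a).1 (Sum.inl.inj h.symm)
              exact absurd (hsub y hgy.1 hgy.2 (orbN_symm π' h2)) hgy.1
            · rw [if_neg hax] at h
              exact absurd h (by simp)
          · rw [if_neg hgy] at h
            by_cases hax : a ∈ orbN π x
            · by_cases hay : a ∈ orbN π y
              · exact orbN_trans π hay (orbN_symm π hax)
              · rw [if_pos hax] at h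
                rw [if_neg hay] at h
                exact absurd h (by simp)
            · rw [if_neg hax] at h
              by_cases hay : a ∈ orbN π y
              · rw [if_pos hay] at h
                exact absurd h (by simp)
              · have hbx : b ∈ orbN π x := by by_contra hbx; exact hgx ⟨hax, hbx⟩
                have hby : b ∈ orbN π y := by by_contra hby; exact hgy ⟨hay, hby⟩
                exact orbN_trans π hby (orbN_symm π hbx)
  calc Nat.card (MulAction.orbitRel.Quotient (Subgroup.zpowers π) α)
      ≤ Nat.card ((MulAction.orbitRel.Quotient (Subgroup.zpowers π') α) ⊕ Unit) := key
    _ = _ := by rw [Nat.card_sum]; simp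

end Part2

section Part3
variable {α : Type*} [Finite α]

open Equiv

lemma swap_comm' [DecidableEq α] (a b c d : α)
    (h : (a ≠ c ∧ a ≠ d ∧ b ≠ c ∧ b ≠ d) ∨ a = b ∨ c = d) :
    Equiv.swap a b * Equiv.swap c d = Equiv.swap c d * Equiv.swap a b := by
  rcases h with ⟨h1, h2, h3, h4⟩ | rfl | rfl
  · refine (Equiv.Perm.Disjoint.commute ?_).eq
    intro z
    rcases eq_or_ne z a with rfl | hza
    · right; exact swap_apply_of_ne_of_ne h1 h2
    rcases eq_or_ne z b with rfl | hzb
    · right; exact swap_apply_of_ne_of_ne h3 h4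
    · left; exact swap_apply_of_ne_of_ne hza hzb
  · rw [Equiv.swap_self a, ← Equiv.Perm.one_def, one_mul, mul_one]
  · rw [Equiv.swap_self c, ← Equiv.Perm.one_def, one_mul, mul_one]

lemma pow_succ_apply (π : Perm α) (n : ℕ) (x : α) : (π ^ (n+1)) x = π ((π ^ n) x) := by
  rw [pow_succ', Perm.mul_apply]

lemma pow_fixed {π : Perm α} {p : α} (hfix : π p = p) : ∀ m : ℕ, (π ^ m) p = p := by
  intro m
  induction m with
  | zero => rfl
  | succ m ih => rw [pow_succ', Perm.mul_apply, ih, hfix]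

lemma orbN_fixed {π : Perm α} {p z : α} (hfix : π p = p) (h : z ∈ orbN π p) : z = p := by
  obtain ⟨n, rfl⟩ := h
  exact pow_fixed hfix n

lemma orbN_two_cycle {π : Perm α} {P₁ P₂ z : α} (h1 : π P₁ = P₂) (h2 : π P₂ = P₁)
    (h : z ∈ orbN π P₁) : z = P₁ ∨ z = P₂ := by
  obtain ⟨n, rfl⟩ := h
  induction n with
  | zero => exact Or.inl rfl
  | succ n ih =>
    rw [pow_succ', Perm.mul_apply]
    rcases ih with h | h <;> rw [h]
    · exact Or.inr h1
    · exact Or.inl h2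

lemma eq_iter_of_eqOn (π π' : Perm α) (d₀ : α) (h : ∀ z, z ∈ orbN π d₀ → π' z = π z) :
    ∀ n : ℕ, (π' ^ n) d₀ = (π ^ n) d₀ := by
  intro n
  induction n with
  | zero => rfl
  | succ n ih =>
    rw [pow_succ', pow_succ', Perm.mul_apply, Perm.mul_apply, ih, h _ ⟨n, rfl⟩]

/-- inserting a fixed point into a cycle keeps the (enlarged) cycle transitive -/
lemma insert_orbit [DecidableEq α] (π : Perm α) (e p : α) (hep : e ≠ p) (hfix : π p = p)
    {d d' : α} (hd : d = p ∨ d ∈ orbN π e) (hd' : d' = p ∨ d' ∈ orbN π e) :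
    ∃ n : ℕ, ((Equiv.swap e p * π) ^ n) d = d' := by
  set π' := Equiv.swap e p * π with hπ'
  set r := Function.minimalPeriod (⇑π) e with hr
  have hrpos : 0 < r := mp_pos π e
  have hpnot : ∀ n : ℕ, (π ^ n) e ≠ p := by
    intro n h
    have h2 : e ∈ orbN π p := orbN_symm π ⟨n, h⟩
    exact hep (orbN_fixed hfix h2)
  have key1 : ∀ k, k < r → (π' ^ k) e = (π ^ k) e := by
    intro k hk
    induction k with
    | zero => rfl
    | succ k ih =>
      rw [pow_succ_apply π', ih (by omega)]
      show (Equiv.swap e p * π) _ = _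
      rw [Perm.mul_apply, ← pow_succ_apply π]
      apply swap_apply_of_ne_of_ne
      · intro h
        have h0 : (π ^ (k+1)) e = (π ^ 0) e := h
        have := pow_inj_mp π e (show k+1 < r from hk) (show 0 < r from hrpos) h0
        omega
      · exact hpnot (k+1)
  have key2 : (π' ^ r) e = p := by
    have h1 : (π' ^ r) e = π' ((π' ^ (r-1)) e) := by
      conv_lhs => rw [show r = (r-1)+1 by omega]
      rw [pow_succ_apply]
    rw [h1, key1 (r-1) (by omega)]
    show (Equiv.swap e p * π) _ = _
    rw [Perm.mul_apply, ← pow_succ_apply π]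
    have h2 : (π ^ (r-1+1)) e = e := by
      rw [show r-1+1 = r by omega]
      exact pow_mp π e
    rw [h2, swap_apply_left]
  have key3 : (π' ^ (r+1)) e = e := by
    rw [pow_succ_apply, key2]
    show (Equiv.swap e p * π) p = e
    rw [Perm.mul_apply, hfix, swap_apply_right]
  have hrep : ∀ z, (z = p ∨ z ∈ orbN π e) → ∃ i, i ≤ r ∧ (π' ^ i) e = z := by
    rintro z (rfl | ⟨n, rfl⟩)
    · exact ⟨r, le_refl r, key2⟩
    · refine ⟨n % r, le_of_lt (Nat.mod_lt n hrpos), ?_⟩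
      rw [key1 (n % r) (Nat.mod_lt n hrpos)]
      exact pow_mod_mp π e n
  obtain ⟨i, hi, hie⟩ := hrep d hd
  obtain ⟨j, hj, hje⟩ := hrep d' hd'
  refine ⟨(r + 1 - i) + j, ?_⟩
  rw [← hie, ← hje, ← Perm.mul_apply, ← pow_add]
  have harith : (r + 1 - i) + j + i = j + (r+1) := by omega
  rw [harith, pow_add, Perm.mul_apply, key3]

/-- step equations imply the iterate picture of a spliced cycle -/
lemma splice_iter (π π' : Perm α) (d₀ : α) (j L : ℕ) (B : ℕ → α)
    (hj : j < Function.minimalPeriod ⇑π d₀)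
    (hL : 0 < L)
    (S1 : ∀ n, n < Function.minimalPeriod ⇑π d₀ → n ≠ j →
      π' ((π ^ n) d₀) = (π ^ (n+1)) d₀)
    (S2 : π' ((π ^ j) d₀) = B 0)
    (S3 : ∀ s, s + 1 < L → π' (B s) = B (s+1))
    (S4 : π' (B (L-1)) = (π ^ (j+1)) d₀)
    (S5 : ∀ s, s < L → ∀ n, B s ≠ (π ^ n) d₀) :
    Function.minimalPeriod ⇑π' d₀ = Function.minimalPeriod ⇑π d₀ + L ∧
    ∀ n, n < Function.minimalPeriod ⇑π d₀ →
      (π' ^ (if n ≤ j then n else n + L)) d₀ = (π ^ n) d₀ := by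
  set p := Function.minimalPeriod ⇑π d₀ with hpd
  have hp : 0 < p := mp_pos π d₀
  have C1 : ∀ n, n ≤ j → (π' ^ n) d₀ = (π ^ n) d₀ := by
    intro n hn
    induction n with
    | zero => rfl
    | succ n ih =>
      rw [pow_succ', Perm.mul_apply, ih (by omega), S1 n (by omega) (by omega),
        pow_succ', Perm.mul_apply]
  have CB : ∀ s, s < L → (π' ^ (j + 1 + s)) d₀ = B s := by
    intro s hs
    induction s with
    | zero =>
      rw [Nat.add_zero, pow_succ', Perm.mul_apply, C1 j le_rfl, S2]
    | succ s ih =>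
      rw [show j+1+(s+1) = (j+1+s)+1 by omega, pow_succ', Perm.mul_apply,
        ih (by omega), S3 s (by omega)]
  have C2 : ∀ n, j + 1 ≤ n → n ≤ p → (π' ^ (n + L)) d₀ = (π ^ n) d₀ := by
    intro n h1 h2
    induction n with
    | zero => omega
    | succ n ih =>
      rcases Nat.eq_or_lt_of_le h1 with heq | hlt
      · have hn : j = n := by omega
        subst hn
        rw [show j+1+L = (j+1+(L-1))+1 by omega, pow_succ', Perm.mul_apply,
          CB (L-1) (by omega), S4]
      · rw [show n+1+L = (n+L)+1 by omega, pow_succ', Perm.mul_apply,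
          ih (by omega) (by omega), S1 n (by omega) (by omega), pow_succ', Perm.mul_apply]
  have hper : (π' ^ (p + L)) d₀ = d₀ := by
    rw [C2 p (by omega) (le_refl p)]
    exact pow_mp π d₀
  have hne : ∀ n, 0 < n → n < p + L → (π' ^ n) d₀ ≠ d₀ := by
    intro n h0 hn
    by_cases h1 : n ≤ j
    · rw [C1 n h1]
      intro h
      have h2 : (π ^ n) d₀ = (π ^ 0) d₀ := h
      have := pow_inj_mp π d₀ (show n < p by omega) (show 0 < p from hp) h2
      omega
    · by_cases h2 : n ≤ j + L
      · rw [show n = j + 1 + (n - j - 1) by omega, CB (n-j-1) (by omega)]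
        intro h
        exact S5 (n-j-1) (by omega) 0 h
      · rw [show n = (n - L) + L by omega, C2 (n-L) (by omega) (by omega)]
        intro h
        have h3 : (π ^ (n - L)) d₀ = (π ^ 0) d₀ := h
        have := pow_inj_mp π d₀ (show n - L < p by omega) (show 0 < p from hp) h3
        omega
  constructor
  · have hle : Function.minimalPeriod ⇑π' d₀ ≤ p + L := by
      apply Function.IsPeriodicPt.minimalPeriod_le (by omega)
      show Function.IsPeriodicPt ⇑π' (p+L) d₀
      unfold Function.IsPeriodicPt Function.IsFixedPt
      rw [← Equiv.Perm.coe_pow]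
      exact hper
    have hpos : 0 < Function.minimalPeriod ⇑π' d₀ := mp_pos π' d₀
    have hval : (π' ^ (Function.minimalPeriod ⇑π' d₀)) d₀ = d₀ := pow_mp π' d₀
    by_contra hne2
    exact hne _ hpos (by omega) hval
  · intro n hn
    by_cases h1 : n ≤ j
    · rw [if_pos h1]; exact C1 n h1
    · rw [if_neg h1]; exact C2 n (by omega) (by omega)

end Part3

section Part4
variable {α : Type*} [Finite α] [DecidableEq α]

open Equiv

lemma build_splice (π : Perm α) (d₀ E P₁ P₂ F : α)
    (hP₁P₂ : π P₁ = P₂) (hP₂P₁ : π P₂ = P₁) (hP₁₂ : P₁ ≠ P₂)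
    (hP₁T : P₁ ∉ orbN π d₀) (hP₂T : P₂ ∉ orbN π d₀)
    (hE : E ∈ orbN π d₀)
    (hF : F = P₂ ∨ (F ∉ orbN π d₀ ∧ F ≠ P₁ ∧ F ≠ P₂)) :
    ∃ L j : ℕ, 0 < L ∧ j < Function.minimalPeriod ⇑π d₀ ∧
      Function.minimalPeriod ⇑(Equiv.swap E P₁ * Equiv.swap F P₂ * π) d₀
        = Function.minimalPeriod ⇑π d₀ + L ∧
      ∀ n, n < Function.minimalPeriod ⇑π d₀ →
        ((Equiv.swap E P₁ * Equiv.swap F P₂ * π) ^ (if n ≤ j then n else n + L)) d₀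
          = (π ^ n) d₀ := by
  set π' := Equiv.swap E P₁ * Equiv.swap F P₂ * π with hπ'
  set p := Function.minimalPeriod ⇑π d₀ with hpd
  have hp : 0 < p := mp_pos π d₀
  have happly : ∀ z, π' z = Equiv.swap E P₁ (Equiv.swap F P₂ (π z)) := fun z => rfl
  obtain ⟨t0, ht0⟩ := hE
  have ht : (π ^ (t0 % p)) d₀ = E := by rw [pow_mod_mp π d₀ t0]; exact ht0
  set t := t0 % p with htdef
  have htp : t < p := Nat.mod_lt _ hp
  set j := if t = 0 then p - 1 else t - 1 with hjdef
  have hj : j < p := by rw [hjdef]; split <;> omega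
  have hEj : (π ^ (j+1)) d₀ = E := by
    rw [hjdef]
    split
    · next h =>
      rw [show p-1+1 = p by omega, pow_mp π d₀, ← ht, h]
      rfl
    · next h =>
      rw [show t-1+1 = t by omega]
      exact ht
  have hET : E ∈ orbN π d₀ := ⟨t0, ht0⟩
  have hEP₁ : E ≠ P₁ := fun h => hP₁T (h ▸ hET)
  have hEP₂ : E ≠ P₂ := fun h => hP₂T (h ▸ hET)
  have hFT : F ∉ orbN π d₀ := by
    rcases hF with rfl | ⟨h, _, _⟩
    exacts [hP₂T, h]
  have hEF : E ≠ F := fun h => hFT (h ▸ hET)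
  have hTmem : ∀ n : ℕ, (π ^ n) d₀ ∈ orbN π d₀ := fun n => ⟨n, rfl⟩
  have hEuniq : ∀ n, n < p → (π ^ (n+1)) d₀ = E → n = j := by
    intro n hn h
    rcases Nat.lt_or_ge (n+1) p with h1 | h1
    · rcases Nat.lt_or_ge (j+1) p with h2 | h2
      · have := pow_inj_mp π d₀ h1 h2 (h.trans hEj.symm)
        omega
      · have hEd : E = d₀ := by
          rw [← hEj, show j+1 = p by omega]
          exact pow_mp π d₀
        have h3 : (π ^ (n+1)) d₀ = (π ^ 0) d₀ := by rw [h, hEd]; rfl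
        have := pow_inj_mp π d₀ h1 hp h3
        omega
    · have hnp : n + 1 = p := by omega
      rcases Nat.lt_or_ge (j+1) p with h2 | h2
      · have hEd : E = d₀ := by rw [← h, hnp]; exact pow_mp π d₀
        have h4 : (π ^ (j+1)) d₀ = (π ^ 0) d₀ := by rw [hEj, hEd]; rfl
        have := pow_inj_mp π d₀ h2 hp h4
        omega
      · omega
  set q := if F = P₂ then 0 else Function.minimalPeriod ⇑π F with hqdef
  set L := q + 2 with hLdef
  set B : ℕ → α := fun s => if s = 0 then P₁ else if s = q + 1 then P₂ else (π ^ (s-1)) F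
    with hBdef
  have hB0 : B 0 = P₁ := by simp [hBdef]
  have hBq1 : B (q+1) = P₂ := by simp [hBdef]
  have hBmid : ∀ s, s ≠ 0 → s ≠ q+1 → B s = (π ^ (s-1)) F := by
    intro s h1 h2
    simp [hBdef, h1, h2]
  have hqpos : F ≠ P₂ → 0 < q := by
    intro h
    rw [hqdef, if_neg h]
    exact mp_pos π F
  have hqF : F ≠ P₂ → q = Function.minimalPeriod ⇑π F := by
    intro h; rw [hqdef, if_neg h]
  have hFpow : ∀ s : ℕ, (π ^ s) F ∈ orbN π F := fun s => ⟨s, rfl⟩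
  have hOFdisj : ∀ s : ℕ, (π ^ s) F ∉ orbN π d₀ := fun s => orbN_disjoint π hFT _ (hFpow s)
  have hP₁OF : ∀ s : ℕ, F ≠ P₂ → (π ^ s) F ≠ P₁ := by
    intro s hFr h
    have h2 : P₁ ∈ orbN π F := h ▸ hFpow s
    have h3 := orbN_two_cycle hP₁P₂ hP₂P₁ (orbN_symm π h2)
    rcases hF with rfl | ⟨_, hF1, hF2⟩
    · exact hFr rfl
    · rcases h3 with h3 | h3
      exacts [hF1 h3, hF2 h3]
  have hP₂OF : ∀ s : ℕ, F ≠ P₂ → (π ^ s) F ≠ P₂ := by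
    intro s hFr h
    have h2 : P₂ ∈ orbN π F := h ▸ hFpow s
    have h3 := orbN_two_cycle hP₂P₁ hP₁P₂ (orbN_symm π h2)
    rcases hF with rfl | ⟨_, hF1, hF2⟩
    · exact hFr rfl
    · rcases h3 with h3 | h3
      exacts [hF2 h3, hF1 h3]
  have hEOF : ∀ s : ℕ, (π ^ s) F ≠ E := by
    intro s h
    exact hOFdisj s (h ▸ hET)
  -- S1
  have S1 : ∀ n, n < p → n ≠ j → π' ((π ^ n) d₀) = (π ^ (n+1)) d₀ := by
    intro n hn hnj
    have hw := hTmem (n+1)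
    have h1 : (π ^ (n+1)) d₀ ≠ F := fun h => hFT (h ▸ hw)
    have h2 : (π ^ (n+1)) d₀ ≠ P₂ := fun h => hP₂T (h ▸ hw)
    have h3 : (π ^ (n+1)) d₀ ≠ E := fun h => hnj (hEuniq n hn h)
    have h4 : (π ^ (n+1)) d₀ ≠ P₁ := fun h => hP₁T (h ▸ hw)
    rw [happly, ← pow_succ_apply π, swap_apply_of_ne_of_ne h1 h2,
      swap_apply_of_ne_of_ne h3 h4]
  -- S2
  have S2 : π' ((π ^ j) d₀) = B 0 := by
    rw [happly, ← pow_succ_apply π, hEj, swap_apply_of_ne_of_ne hEF hEP₂,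
      swap_apply_left, hB0]
  -- S3
  have S3 : ∀ s, s + 1 < L → π' (B s) = B (s+1) := by
    intro s hs
    rcases Nat.eq_zero_or_pos s with rfl | hspos
    · rw [hB0, happly, hP₁P₂]
      by_cases hFr : F = P₂
      · have hq0 : q = 0 := by rw [hqdef, if_pos hFr]
        rw [hFr, Equiv.swap_self, Equiv.refl_apply,
          swap_apply_of_ne_of_ne (Ne.symm hEP₂) (Ne.symm hP₁₂)]
        rw [show (0:ℕ)+1 = q+1 by omega, hBq1]
      · rw [swap_apply_right,
          swap_apply_of_ne_of_ne (Ne.symm hEF) ?hne1]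
        · have hq0 := hqpos hFr
          rw [hBmid 1 (by omega) (by omega)]
          rfl
        · rcases hF with rfl | ⟨_, hF1, _⟩
          · exact absurd rfl hFr
          · exact hF1
    · -- s ≥ 1, so q ≥ s ≥ 1 and F is real
      have hsq : s ≤ q := by omega
      have hFr : F ≠ P₂ := by
        intro h
        have : q = 0 := by rw [hqdef, if_pos h]
        omega
      have hq0 := hqpos hFr
      rw [hBmid s (by omega) (by omega), happly, ← pow_succ_apply π,
        show s - 1 + 1 = s by omega]
      rcases Nat.lt_or_ge s q with hslt | hsge
      · -- middle of the F-cycle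
        have h1 : (π ^ s) F ≠ F := by
          intro h
          have h2 : (π ^ s) F = (π ^ 0) F := h
          have h3 : s < Function.minimalPeriod ⇑π F := by rw [← hqF hFr]; omega
          have := pow_inj_mp π F h3 (by rw [← hqF hFr]; omega) h2
          omega
        rw [swap_apply_of_ne_of_ne h1 (hP₂OF s hFr),
          swap_apply_of_ne_of_ne (hEOF s) (hP₁OF s hFr),
          hBmid (s+1) (by omega) (by omega)]
        rfl
      · -- s = q : close the F-cycle
        have hsq' : s = q := by omega
        have h1 : (π ^ s) F = F := by
          rw [hsq', hqF hFr]
          exact pow_mp π F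
        rw [h1, swap_apply_left,
          swap_apply_of_ne_of_ne (Ne.symm hEP₂) (Ne.symm hP₁₂), hsq', hBq1]
  -- S4
  have S4 : π' (B (L-1)) = (π ^ (j+1)) d₀ := by
    have hL1 : B (L-1) = P₂ := by rw [show L-1 = q+1 by omega, hBq1]
    have hP₁F : P₁ ≠ F := by
      rcases hF with rfl | ⟨_, hF1, _⟩
      · exact hP₁₂
      · exact Ne.symm hF1
    rw [hL1, happly, hP₂P₁, swap_apply_of_ne_of_ne hP₁F hP₁₂,
      swap_apply_right, hEj]
  -- S5
  have S5 : ∀ s, s < L → ∀ n, B s ≠ (π ^ n) d₀ := by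
    intro s hsL n h
    rcases Nat.eq_zero_or_pos s with rfl | hspos
    · rw [hB0] at h
      exact hP₁T (by rw [h]; exact hTmem n)
    · by_cases hsq : s = q + 1
      · rw [hsq, hBq1] at h
        exact hP₂T (by rw [h]; exact hTmem n)
      · rw [hBmid s (by omega) hsq] at h
        exact hOFdisj (s-1) (by rw [h]; exact hTmem n)
  obtain ⟨hmp, hiter⟩ := splice_iter π π' d₀ j L B hj (by omega) S1 S2 S3 S4 S5
  exact ⟨L, j, by omega, hj, hmp, hiter⟩

end Part4

section Part5
variable {α : Type*} [Finite α]

open Equiv MulAction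

lemma ext_card_add_two_le {β : Type*} [Finite β] (πH : Perm α) (πD : Perm β) (φ : α → β)
    (hinj : Function.Injective φ) (hcomm : ∀ z, πD (φ z) = φ (πH z))
    (p₁ p₂ : β) (hr₁ : p₁ ∉ Set.range φ) (hr₂ : p₂ ∉ Set.range φ)
    (h1 : πD p₁ = p₁) (h2 : πD p₂ = p₂) (hne : p₁ ≠ p₂) :
    Nat.card (MulAction.orbitRel.Quotient (Subgroup.zpowers πH) α) + 2 ≤
      Nat.card (MulAction.orbitRel.Quotient (Subgroup.zpowers πD) β) := by
  have hwd : ∀ (x y : α), (MulAction.orbitRel (Subgroup.zpowers πH) α) x y →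
      (Quotient.mk'' (φ x) : MulAction.orbitRel.Quotient (Subgroup.zpowers πD) β)
        = Quotient.mk'' (φ y) := by
    intro x y hxy
    obtain ⟨n, rfl⟩ := (orbitRel_iff_orbN πH x y).1 hxy
    exact (clq_eq_iff πD _ _).2 ⟨n, conj_pow πH πD φ hcomm n y⟩
  set f : (MulAction.orbitRel.Quotient (Subgroup.zpowers πH) α) ⊕ Bool →
      MulAction.orbitRel.Quotient (Subgroup.zpowers πD) β :=
    Sum.elim (Quotient.lift (fun z => Quotient.mk'' (φ z)) hwd)
      (fun b => Quotient.mk'' (cond b p₁ p₂)) with hf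
  have hfinj : Function.Injective f := by
    rintro (q | b) (q' | b') h
    · induction q using Quotient.ind
      induction q' using Quotient.ind
      rename_i z z'
      have h2 := (clq_eq_iff πD _ _).1 h
      obtain ⟨n, hn⟩ := h2
      rw [conj_pow πH πD φ hcomm n z'] at hn
      have := hinj hn
      exact congrArg Sum.inl ((clq_eq_iff πH z z').2 ⟨n, this⟩)
    · exfalso
      induction q using Quotient.ind
      rename_i z
      cases b'
      · rw [show f (Sum.inr false) = Quotient.mk'' p₂ from rfl] at h
        have h3 := (clq_eq_iff πD _ _).1 h
        exact hr₂ ⟨z, (orbN_fixed h2 h3)⟩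
      · rw [show f (Sum.inr true) = Quotient.mk'' p₁ from rfl] at h
        have h3 := (clq_eq_iff πD _ _).1 h
        exact hr₁ ⟨z, (orbN_fixed h1 h3)⟩
    · exfalso
      induction q' using Quotient.ind
      rename_i z
      cases b
      · rw [show f (Sum.inr false) = Quotient.mk'' p₂ from rfl] at h
        have h3 := (clq_eq_iff πD _ _).1 h.symm
        exact hr₂ ⟨z, (orbN_fixed h2 h3)⟩
      · rw [show f (Sum.inr true) = Quotient.mk'' p₁ from rfl] at h
        have h3 := (clq_eq_iff πD _ _).1 h.symm
        exact hr₁ ⟨z, (orbN_fixed h1 h3)⟩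
    · cases b <;> cases b'
      · rfl
      · exfalso
        rw [show f (Sum.inr false) = Quotient.mk'' p₂ from rfl,
          show f (Sum.inr true) = Quotient.mk'' p₁ from rfl] at h
        have h3 := (clq_eq_iff πD _ _).1 h
        exact hne (orbN_fixed h1 h3).symm
      · exfalso
        rw [show f (Sum.inr false) = Quotient.mk'' p₂ from rfl,
          show f (Sum.inr true) = Quotient.mk'' p₁ from rfl] at h
        have h3 := (clq_eq_iff πD _ _).1 h
        exact hne (orbN_fixed h2 h3)
      · rfl
  have := Nat.card_le_card_of_injective f hfinj
  have hQfin : Finite (MulAction.orbitRel.Quotient (Subgroup.zpowers πH) α) :=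
    Quotient.finite _
  rw [Nat.card_sum] at this
  simpa using this

lemma ext_card_add_one_le {β : Type*} [Finite β] (πH : Perm α) (πD : Perm β) (φ : α → β)
    (hinj : Function.Injective φ) (hcomm : ∀ z, πD (φ z) = φ (πH z))
    (p₁ p₂ : β) (hr₁ : p₁ ∉ Set.range φ) (hr₂ : p₂ ∉ Set.range φ)
    (h1 : πD p₁ = p₂) (h2 : πD p₂ = p₁) :
    Nat.card (MulAction.orbitRel.Quotient (Subgroup.zpowers πH) α) + 1 ≤
      Nat.card (MulAction.orbitRel.Quotient (Subgroup.zpowers πD) β) := by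
  have hwd : ∀ (x y : α), (MulAction.orbitRel (Subgroup.zpowers πH) α) x y →
      (Quotient.mk'' (φ x) : MulAction.orbitRel.Quotient (Subgroup.zpowers πD) β)
        = Quotient.mk'' (φ y) := by
    intro x y hxy
    obtain ⟨n, rfl⟩ := (orbitRel_iff_orbN πH x y).1 hxy
    exact (clq_eq_iff πD _ _).2 ⟨n, conj_pow πH πD φ hcomm n y⟩
  set f : (MulAction.orbitRel.Quotient (Subgroup.zpowers πH) α) ⊕ Unit →
      MulAction.orbitRel.Quotient (Subgroup.zpowers πD) β :=
    Sum.elim (Quotient.lift (fun z => Quotient.mk'' (φ z)) hwd)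
      (fun _ => Quotient.mk'' p₁) with hf
  have hfinj : Function.Injective f := by
    rintro (q | b) (q' | b') h
    · induction q using Quotient.ind
      induction q' using Quotient.ind
      rename_i z z'
      obtain ⟨n, hn⟩ := (clq_eq_iff πD _ _).1 h
      rw [conj_pow πH πD φ hcomm n z'] at hn
      exact congrArg Sum.inl ((clq_eq_iff πH z z').2 ⟨n, hinj hn⟩)
    · exfalso
      induction q using Quotient.ind
      rename_i z
      have h3 := (clq_eq_iff πD _ _).1 h
      rcases orbN_two_cycle h1 h2 h3 with h4 | h4
      · exact hr₁ ⟨z, h4⟩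
      · exact hr₂ ⟨z, h4⟩
    · exfalso
      induction q' using Quotient.ind
      rename_i z
      have h3 := (clq_eq_iff πD _ _).1 h.symm
      rcases orbN_two_cycle h1 h2 h3 with h4 | h4
      · exact hr₁ ⟨z, h4⟩
      · exact hr₂ ⟨z, h4⟩
    · rfl
  have := Nat.card_le_card_of_injective f hfinj
  have hQfin : Finite (MulAction.orbitRel.Quotient (Subgroup.zpowers πH) α) :=
    Quotient.finite _
  rw [Nat.card_sum] at this
  simpa using this

lemma two_swaps_card [DecidableEq α] (π : Perm α) (a b c d : α) :
    Nat.card (MulAction.orbitRel.Quotient (Subgroup.zpowers π) α) ≤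
      Nat.card (MulAction.orbitRel.Quotient
        (Subgroup.zpowers (Equiv.swap a b * Equiv.swap c d * π)) α) +
      ((if a = b then 0 else 1) + (if c = d then 0 else 1)) := by
  by_cases hab : a = b <;> by_cases hcd : c = d
  · have he : Equiv.swap a b * Equiv.swap c d * π = π := by
      rw [hab, hcd, Equiv.swap_self, Equiv.swap_self, ← Equiv.Perm.one_def, one_mul, one_mul]
    rw [he, if_pos hab, if_pos hcd]
    omega
  · have he : Equiv.swap a b * Equiv.swap c d * π = Equiv.swap c d * π := by
      rw [hab, Equiv.swap_self, ← Equiv.Perm.one_def, one_mul]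
    rw [he, if_pos hab, if_neg hcd]
    exact card_orbQ_le_swap_mul π c d
  · have he : Equiv.swap a b * Equiv.swap c d * π = Equiv.swap a b * π := by
      rw [hcd, Equiv.swap_self, ← Equiv.Perm.one_def, mul_one]
    rw [he, if_neg hab, if_pos hcd]
    exact card_orbQ_le_swap_mul π a b
  · rw [if_neg hab, if_neg hcd]
    calc Nat.card (MulAction.orbitRel.Quotient (Subgroup.zpowers π) α)
        ≤ Nat.card (MulAction.orbitRel.Quotient
            (Subgroup.zpowers (Equiv.swap c d * π)) α) + 1 :=
          card_orbQ_le_swap_mul π c d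
      _ ≤ (Nat.card (MulAction.orbitRel.Quotient
            (Subgroup.zpowers (Equiv.swap a b * (Equiv.swap c d * π))) α) + 1) + 1 := by
          have := card_orbQ_le_swap_mul (Equiv.swap c d * π) a b
          omega
      _ = _ := by rw [← mul_assoc]

-- group-orbit versions
lemma mem_orbitG_iff (Γ : Subgroup (Perm α)) (x y : α) :
    x ∈ MulAction.orbit Γ y ↔ ∃ γ ∈ Γ, γ y = x := by
  constructor
  · rintro ⟨⟨γ, hγ⟩, rfl⟩
    exact ⟨γ, hγ, rfl⟩
  · rintro ⟨γ, hγ, rfl⟩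
    exact ⟨⟨γ, hγ⟩, rfl⟩

lemma clqG_eq_iff (Γ : Subgroup (Perm α)) (x y : α) :
    (Quotient.mk'' x : MulAction.orbitRel.Quotient Γ α) = Quotient.mk'' y
      ↔ x ∈ MulAction.orbit Γ y := by
  rw [Quotient.eq'']
  exact MulAction.orbitRel_apply

lemma cardG_le_of_maps {β : Type*} [Finite β] (Γ : Subgroup (Perm α)) (g : α → β)
    (hwd : ∀ x y : α, x ∈ MulAction.orbit Γ y → g x = g y)
    (hsep : ∀ x y : α, g x = g y → x ∈ MulAction.orbit Γ y) :
    Nat.card (MulAction.orbitRel.Quotient Γ α) ≤ Nat.card β := by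
  have hwd' : ∀ (x y : α), (MulAction.orbitRel Γ α) x y → g x = g y := by
    intro x y h
    exact hwd x y (MulAction.orbitRel_apply.1 h)
  refine Nat.card_le_card_of_injective (Quotient.lift g hwd') ?_
  intro q q'
  induction q using Quotient.ind
  induction q' using Quotient.ind
  intro h
  exact (clqG_eq_iff Γ _ _).2 (hsep _ _ h)

lemma cardG_le_of_rel (Γ Γ' : Subgroup (Perm α))
    (h : ∀ x y : α, x ∈ MulAction.orbit Γ y → x ∈ MulAction.orbit Γ' y) :
    Nat.card (MulAction.orbitRel.Quotient Γ' α) ≤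
      Nat.card (MulAction.orbitRel.Quotient Γ α) := by
  have hfin : Finite (MulAction.orbitRel.Quotient Γ α) := Quotient.finite _
  have hwd : ∀ (x y : α), (MulAction.orbitRel Γ α) x y →
      (Quotient.mk'' x : MulAction.orbitRel.Quotient Γ' α) = Quotient.mk'' y := by
    intro x y hxy
    exact (clqG_eq_iff Γ' x y).2 (h x y (MulAction.orbitRel_apply.1 hxy))
  have hsurj : Function.Surjective
      (Quotient.lift (fun x => (Quotient.mk'' x :
        MulAction.orbitRel.Quotient Γ' α)) hwd) := by
    intro q
    induction q using Quotient.ind with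
    | _ x => exact ⟨Quotient.mk'' x, rfl⟩
  exact Nat.card_le_card_of_surjective _ hsurj

lemma cardG_lt_of_rel (Γ Γ' : Subgroup (Perm α))
    (h : ∀ x y : α, x ∈ MulAction.orbit Γ y → x ∈ MulAction.orbit Γ' y) (w w' : α)
    (hne : w ∉ MulAction.orbit Γ w') (hrel : w ∈ MulAction.orbit Γ' w') :
    Nat.card (MulAction.orbitRel.Quotient Γ' α) + 1 ≤
      Nat.card (MulAction.orbitRel.Quotient Γ α) := by
  have hfin : Finite (MulAction.orbitRel.Quotient Γ α) := Quotient.finite _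
  have hfin' : Finite (MulAction.orbitRel.Quotient Γ' α) := Quotient.finite _
  have hwd : ∀ (x y : α), (MulAction.orbitRel Γ α) x y →
      (Quotient.mk'' x : MulAction.orbitRel.Quotient Γ' α) = Quotient.mk'' y := by
    intro x y hxy
    exact (clqG_eq_iff Γ' x y).2 (h x y (MulAction.orbitRel_apply.1 hxy))
  set f := Quotient.lift (fun x => (Quotient.mk'' x :
      MulAction.orbitRel.Quotient Γ' α)) hwd with hf
  have hsurj : Function.Surjective f := by
    intro q
    induction q using Quotient.ind with
    | _ x => exact ⟨Quotient.mk'' x, rfl⟩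
  have hninj : ¬ Function.Injective f := by
    intro hinj
    have h1 : f (Quotient.mk'' w) = f (Quotient.mk'' w') := by
      show (Quotient.mk'' w : MulAction.orbitRel.Quotient Γ' α) = Quotient.mk'' w'
      exact (clqG_eq_iff Γ' w w').2 hrel
    exact hne ((clqG_eq_iff Γ w w').1 (hinj h1))
  have := Fintype.ofFinite (MulAction.orbitRel.Quotient Γ α)
  have := Fintype.ofFinite (MulAction.orbitRel.Quotient Γ' α)
  have hlt := Fintype.card_lt_of_surjective_not_injective f hsurj hninj
  rw [Fintype.card_eq_nat_card, Fintype.card_eq_nat_card] at hlt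
  exact Nat.succ_le_of_lt hlt

lemma reach (π : Perm α) (x : α) (n₁ n₂ : ℕ) :
    ∃ m : ℕ, (π ^ m) ((π ^ n₁) x) = (π ^ n₂) x := by
  have h1 : (π ^ n₂) x ∈ orbN π x := ⟨n₂, rfl⟩
  rw [orbN_eq π (⟨n₁, rfl⟩ : (π ^ n₁) x ∈ orbN π x)] at h1
  exact h1

end Part5

end AltHelp

namespace AltPaper
section Main
open SimpleGraph Equiv AltHelp

variable {V : Type*} [Fintype V] [DecidableEq V]

instance dartDecEq (G : SimpleGraph V) : DecidableEq G.Dart :=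
  fun d₁ d₂ => decidable_of_iff (d₁.toProd = d₂.toProd)
    ⟨SimpleGraph.Dart.ext d₁ d₂, by rintro rfl; rfl⟩

instance dartFinite (G : SimpleGraph V) : Finite G.Dart :=
  Finite.of_injective SimpleGraph.Dart.toProd SimpleGraph.Dart.toProd_injective

variable (G : SimpleGraph V) (u v : V)

/-- the two darts of the edge `uv` -/
def duvD (huv : G.Adj u v) : G.Dart := ⟨(u, v), huv⟩

def dvuD (huv : G.Adj u v) : G.Dart := ⟨(v, u), huv.symm⟩

/-- inclusion of the darts of `G - uv` into the darts of `G` -/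
def iota (d : (G.deleteEdges {s(u, v)}).Dart) : G.Dart :=
  ⟨d.toProd, ((SimpleGraph.deleteEdges_adj).1 d.adj).1⟩

lemma iota_inj : Function.Injective (iota G u v) := by
  intro d d' h
  exact SimpleGraph.Dart.ext _ _ (congrArg (fun z : G.Dart => z.toProd) h)

lemma iota_edge_ne (d : (G.deleteEdges {s(u, v)}).Dart) : (iota G u v d).edge ≠ s(u, v) := by
  have h := ((SimpleGraph.deleteEdges_adj).1 d.adj).2
  intro he
  apply h
  rw [Set.mem_singleton_iff]
  exact he

lemma iota_symm (d : (G.deleteEdges {s(u, v)}).Dart) :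
    iota G u v d.symm = (iota G u v d).symm :=
  SimpleGraph.Dart.ext _ _ rfl

/-- the equivalence between darts of `G - uv` and non-`uv` darts of `G` -/
def eqvD : (G.deleteEdges {s(u, v)}).Dart ≃ {d : G.Dart // d.edge ≠ s(u, v)} where
  toFun d := ⟨iota G u v d, iota_edge_ne G u v d⟩
  invFun s := ⟨s.val.toProd, (SimpleGraph.deleteEdges_adj).2
    ⟨s.val.adj, fun hm => s.prop (Set.mem_singleton_iff.1 hm)⟩⟩
  left_inv d := SimpleGraph.Dart.ext _ _ rfl
  right_inv s := Subtype.ext (SimpleGraph.Dart.ext _ _ rfl)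

noncomputable instance pdInst : DecidablePred (fun d : G.Dart => d.edge ≠ s(u, v)) :=
  fun _ => Classical.dec _

/-- the rotation of `G - uv` extended to the darts of `G` (fixing the two new darts) -/
noncomputable def rhoP (R : RotSys (G.deleteEdges {s(u, v)})) : Equiv.Perm G.Dart :=
  R.rot.extendDomain (eqvD G u v)

lemma rhoP_iota (R : RotSys (G.deleteEdges {s(u, v)}))
    (d : (G.deleteEdges {s(u, v)}).Dart) :
    rhoP G u v R (iota G u v d) = iota G u v (R.rot d) := by
  unfold rhoP
  rw [Equiv.Perm.extendDomain_apply_subtype R.rot (eqvD G u v) (iota_edge_ne G u v d)]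
  have h2 : (eqvD G u v).symm ⟨iota G u v d, iota_edge_ne G u v d⟩ = d := by
    rw [Equiv.symm_apply_eq]
    exact Subtype.ext rfl
  rw [h2]
  rfl

lemma rhoP_new (R : RotSys (G.deleteEdges {s(u, v)})) (d : G.Dart)
    (h : d.edge = s(u, v)) : rhoP G u v R d = d := by
  unfold rhoP
  exact Equiv.Perm.extendDomain_apply_not_subtype R.rot (eqvD G u v) (by simp [h])

lemma edge_cases (huv : G.Adj u v) (d : G.Dart) (h : d.edge = s(u, v)) :
    d = duvD G u v huv ∨ d = dvuD G u v huv := by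
  have h2 : s(d.toProd.1, d.toProd.2) = s(u, v) := h
  rw [Sym2.eq_iff] at h2
  rcases h2 with ⟨h3, h4⟩ | ⟨h3, h4⟩
  · left
    apply SimpleGraph.Dart.ext
    exact Prod.ext h3 h4
  · right
    apply SimpleGraph.Dart.ext
    exact Prod.ext h3 h4

lemma genusLE_of_no_edge (G' : SimpleGraph V) (k : ℕ) (h : ∀ a b, ¬ G'.Adj a b) :
    GenusLE G' k := by
  have hempty : IsEmpty G'.Dart := ⟨fun d => h _ _ d.adj⟩
  refine ⟨⟨1, fun d => rfl, fun d d' _ => (hempty.false d).elim⟩, ?_⟩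
  unfold RotSys.genusLE RotSys.numComps RotSys.numFaces RotSys.numVerts
  have hq1 : IsEmpty (MulAction.orbitRel.Quotient
      (Subgroup.closure {(⟨1, fun d => rfl, fun d d' _ => (hempty.false d).elim⟩ :
        RotSys G').rot, dartRev G'}) G'.Dart) := by
    constructor
    intro q
    induction q using Quotient.ind with
    | _ d => exact (hempty.false d).elim
  have hedgeempty : IsEmpty G'.edgeSet := by
    constructor
    rintro ⟨e, he⟩
    induction e using Sym2.ind with
    | _ a b => exact h a b ((SimpleGraph.mem_edgeSet G').1 he)
  have h1 := Nat.card_of_isEmpty (α := G'.edgeSet)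
  rw [Nat.card_of_isEmpty, h1]
  omega

lemma main_construct (G : SimpleGraph V) (x y u v : V) (k : ℕ) (huv : G.Adj u v)
    (R : RotSys (G.deleteEdges {s(u, v)})) (hgen : R.genusLE k) (halt : R.altFace x y)
    (hcof : ¬ R.Cofacial u v) : AltEmb G x y (k + 1) := by
  classical
  obtain ⟨d₀, a, b, c, ha, hab, hbc, hcp, hx1, hy1, hx2, hy2⟩ := halt
  set P₁ := duvD G u v huv with hP₁def
  set P₂ := dvuD G u v huv with hP₂def
  set ι := iota G u v with hιdef
  set ρ := rhoP G u v R with hρdef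
  have huvne : u ≠ v := G.ne_of_adj huv
  have hP₁edge : P₁.edge = s(u, v) := rfl
  have hP₂edge : P₂.edge = s(u, v) := Sym2.eq_swap
  have hP₁fst : P₁.fst = u := rfl
  have hP₂fst : P₂.fst = v := rfl
  have hP₁₂ : P₁ ≠ P₂ := fun h => huvne (by rw [← hP₁fst, h, hP₂fst])
  have hιfst : ∀ d, (ι d).fst = d.fst := fun d => rfl
  have hιedge : ∀ d, (ι d).edge ≠ s(u, v) := iota_edge_ne G u v
  have hιinj : Function.Injective ι := iota_inj G u v
  have hριA : ∀ d, ρ (ι d) = ι (R.rot d) := rhoP_iota G u v R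
  have hρP₁ : ρ P₁ = P₁ := rhoP_new G u v R _ hP₁edge
  have hρP₂ : ρ P₂ = P₂ := rhoP_new G u v R _ hP₂edge
  have hcasesE : ∀ d : G.Dart, d.edge = s(u, v) → d = P₁ ∨ d = P₂ := edge_cases G u v huv
  have hsurjι : ∀ d : G.Dart, d.edge ≠ s(u, v) → ∃ z, ι z = d := by
    intro d h
    refine ⟨(eqvD G u v).symm ⟨d, h⟩, ?_⟩
    have := (eqvD G u v).apply_symm_apply ⟨d, h⟩
    exact congrArg Subtype.val this
  -- the face permutation of the extension
  set F₀ : Equiv.Perm G.Dart := (dartRev G).trans ρ with hF₀def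
  have hF₀ι : ∀ z, F₀ (ι z) = ι (R.facePerm z) := by
    intro z
    show ρ ((ι z).symm) = _
    rw [← iota_symm G u v z]
    exact hριA z.symm
  have hF₀P₁ : F₀ P₁ = P₂ := by
    show ρ (P₁.symm) = P₂
    have h : P₁.symm = P₂ := SimpleGraph.Dart.ext _ _ rfl
    rw [h]
    exact hρP₂
  have hF₀P₂ : F₀ P₂ = P₁ := by
    show ρ (P₂.symm) = P₁
    have h : P₂.symm = P₁ := SimpleGraph.Dart.ext _ _ rfl
    rw [h]
    exact hρP₁
  have hF₀pow : ∀ (n : ℕ) z, (F₀ ^ n) (ι z) = ι ((R.facePerm ^ n) z) :=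
    AltHelp.conj_pow R.facePerm F₀ ι hF₀ι
  set dd₀ := ι d₀ with hdd₀def
  have hmp₀ : Function.minimalPeriod ⇑F₀ dd₀ = Function.minimalPeriod ⇑R.facePerm d₀ := by
    apply AltHelp.mp_eq_of_iff
    intro n
    unfold Function.IsPeriodicPt Function.IsFixedPt
    rw [← Equiv.Perm.coe_pow, ← Equiv.Perm.coe_pow]
    constructor
    · intro h
      rw [hF₀pow n d₀] at h
      exact hιinj h
    · intro h
      rw [hF₀pow n d₀, h]
  set T := AltHelp.orbN F₀ dd₀ with hTdef
  have hTrep : ∀ w, w ∈ T → ∃ n : ℕ, w = ι ((R.facePerm ^ n) d₀) := by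
    rintro w ⟨n, rfl⟩
    exact ⟨n, hF₀pow n d₀⟩
  have hP₁T : P₁ ∉ T := by
    intro h
    obtain ⟨n, hn⟩ := hTrep _ h
    exact hιedge _ (by rw [← hn]; exact hP₁edge)
  have hP₂T : P₂ ∉ T := by
    intro h
    obtain ⟨n, hn⟩ := hTrep _ h
    exact hιedge _ (by rw [← hn]; exact hP₂edge)
  have hTuv : ¬ ((∃ w ∈ T, w.fst = u) ∧ (∃ w ∈ T, w.fst = v)) := by
    rintro ⟨⟨w1, hw1T, hw1⟩, ⟨w2, hw2T, hw2⟩⟩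
    obtain ⟨n1, rfl⟩ := hTrep _ hw1T
    obtain ⟨n2, rfl⟩ := hTrep _ hw2T
    apply hcof
    obtain ⟨m, hm⟩ := AltHelp.reach R.facePerm d₀ n1 n2
    exact ⟨(R.facePerm ^ n1) d₀, m, hw1, by rw [hm]; exact hw2⟩
  -- choice of the insertion darts
  have heuEx : ∃ eu : G.Dart, eu.fst = u ∧ (eu = P₁ ∨ eu.edge ≠ s(u, v)) ∧
      (eu = P₁ → ∀ z : G.Dart, z.fst = u → z = P₁) := by
    by_cases hex : ∃ z : G.Dart, z.fst = u ∧ z.edge ≠ s(u, v)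
    · obtain ⟨z, hz1, hz2⟩ := hex
      refine ⟨z, hz1, Or.inr hz2, fun h => absurd hP₁edge (h ▸ hz2)⟩
    · refine ⟨P₁, hP₁fst, Or.inl rfl, fun _ z hz => ?_⟩
      by_cases hz2 : z.edge = s(u, v)
      · rcases hcasesE z hz2 with rfl | rfl
        · rfl
        · exact absurd hz huvne.symm
      · exact absurd ⟨z, hz, hz2⟩ hex
  have hfvEx : ∃ fv : G.Dart, fv.fst = v ∧ (fv = P₂ ∨ fv.edge ≠ s(u, v)) ∧
      (fv = P₂ → ∀ z : G.Dart, z.fst = v → z = P₂) := by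
    by_cases hex : ∃ z : G.Dart, z.fst = v ∧ z.edge ≠ s(u, v)
    · obtain ⟨z, hz1, hz2⟩ := hex
      refine ⟨z, hz1, Or.inr hz2, fun h => absurd hP₂edge (h ▸ hz2)⟩
    · refine ⟨P₂, hP₂fst, Or.inl rfl, fun _ z hz => ?_⟩
      by_cases hz2 : z.edge = s(u, v)
      · rcases hcasesE z hz2 with rfl | rfl
        · exact absurd hz huvne
        · rfl
      · exact absurd ⟨z, hz, hz2⟩ hex
  obtain ⟨eu, heuf, heuor, heusent⟩ := heuEx
  obtain ⟨fv, hfvf, hfvor, hfvsent⟩ := hfvEx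
  have heuP₂ : eu ≠ P₂ := fun h => huvne (by rw [← heuf, h, hP₂fst])
  have hfvP₁ : fv ≠ P₁ := fun h => huvne (by rw [← hP₁fst, ← h, hfvf])
  have heufv : eu ≠ fv := fun h => huvne (by rw [← heuf, h, hfvf])
  set σu := Equiv.swap eu P₁ with hσudef
  set σv := Equiv.swap fv P₂ with hσvdef
  have hcomm : σu * σv = σv * σu :=
    AltHelp.swap_comm' eu P₁ fv P₂ (Or.inl ⟨heufv, heuP₂, Ne.symm hfvP₁, hP₁₂⟩)
  set rot' := σu * σv * ρ with hrot'def
  have happly : ∀ z, rot' z = σu (σv (ρ z)) := fun z => rfl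
  -- rot preserves sources
  have hρfst : ∀ d : G.Dart, (ρ d).fst = d.fst := by
    intro d
    by_cases h : d.edge = s(u, v)
    · rw [rhoP_new G u v R d h]
    · obtain ⟨z, rfl⟩ := hsurjι d h
      rw [hριA]
      exact R.fst_rot z
  have hswapfst : ∀ (p q : G.Dart), p.fst = q.fst →
      ∀ d, ((Equiv.swap p q) d).fst = d.fst := by
    intro p q hpq d
    rcases eq_or_ne d p with rfl | h1
    · rw [Equiv.swap_apply_left, ← hpq]
    rcases eq_or_ne d q with rfl | h2
    · rw [Equiv.swap_apply_right, hpq]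
    · rw [Equiv.swap_apply_of_ne_of_ne h1 h2]
  have hσufst : ∀ d, (σu d).fst = d.fst :=
    hswapfst eu P₁ (by rw [heuf, hP₁fst])
  have hσvfst : ∀ d, (σv d).fst = d.fst :=
    hswapfst fv P₂ (by rw [hfvf, hP₂fst])
  have hrot'fst : ∀ d, (rot' d).fst = d.fst := by
    intro d
    rw [happly, hσufst, hσvfst, hρfst]
  -- iterate of R.rot preserves sources
  have hrotpowfst : ∀ (m : ℕ) (w : (G.deleteEdges {s(u, v)}).Dart),
      ((R.rot ^ m) w).fst = w.fst := by
    intro m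
    induction m with
    | zero => intro w; rfl
    | succ m ih =>
      intro w
      rw [AltHelp.pow_succ_apply, R.fst_rot, ih]
  -- transport of rot-iterates on the fiber of a vertex avoiding the swapped darts
  have hkeyu : ∀ (m : ℕ) (w : (G.deleteEdges {s(u, v)}).Dart), w.fst = u →
      ((σv * ρ) ^ m) (ι w) = ι ((R.rot ^ m) w) := by
    intro m
    induction m with
    | zero => intro w _; rfl
    | succ m ih =>
      intro w hw
      have hfst : (ι (R.rot ((R.rot ^ m) w))).fst = u := by
        have h1 := R.fst_rot ((R.rot ^ m) w)
        have h2 := hrotpowfst m w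
        show (R.rot ((R.rot ^ m) w)).fst = u
        rw [h1, h2, hw]
      have hval : (σv * ρ) (ι ((R.rot ^ m) w)) = ι (R.rot ((R.rot ^ m) w)) := by
        rw [Equiv.Perm.mul_apply, hριA, hσvdef]
        exact Equiv.swap_apply_of_ne_of_ne
          (fun h => huvne (by rw [← hfst, h, hfvf]))
          (fun h => huvne (by rw [← hfst, h, hP₂fst]))
      rw [AltHelp.pow_succ_apply, ih w hw, hval, ← AltHelp.pow_succ_apply]
  have hkeyv : ∀ (m : ℕ) (w : (G.deleteEdges {s(u, v)}).Dart), w.fst = v →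
      ((σu * ρ) ^ m) (ι w) = ι ((R.rot ^ m) w) := by
    intro m
    induction m with
    | zero => intro w _; rfl
    | succ m ih =>
      intro w hw
      have hfst : (ι (R.rot ((R.rot ^ m) w))).fst = v := by
        have h1 := R.fst_rot ((R.rot ^ m) w)
        have h2 := hrotpowfst m w
        show (R.rot ((R.rot ^ m) w)).fst = v
        rw [h1, h2, hw]
      have hval : (σu * ρ) (ι ((R.rot ^ m) w)) = ι (R.rot ((R.rot ^ m) w)) := by
        rw [Equiv.Perm.mul_apply, hριA, hσudef]
        exact Equiv.swap_apply_of_ne_of_ne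
          (fun h => huvne (by rw [← heuf, ← h, hfst]))
          (fun h => huvne (by rw [← hP₁fst, ← h, hfst]))
      rw [AltHelp.pow_succ_apply, ih w hw, hval, ← AltHelp.pow_succ_apply]
  have hkeyw : ∀ (m : ℕ) (w : (G.deleteEdges {s(u, v)}).Dart), w.fst ≠ u → w.fst ≠ v →
      (rot' ^ m) (ι w) = ι ((R.rot ^ m) w) := by
    intro m
    induction m with
    | zero => intro w _ _; rfl
    | succ m ih =>
      intro w hwu hwv
      have hfst : (ι (R.rot ((R.rot ^ m) w))).fst = w.fst := by
        have h1 := R.fst_rot ((R.rot ^ m) w)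
        have h2 := hrotpowfst m w
        show (R.rot ((R.rot ^ m) w)).fst = w.fst
        rw [h1, h2]
      have hval : rot' (ι ((R.rot ^ m) w)) = ι (R.rot ((R.rot ^ m) w)) := by
        rw [happly, hριA, hσvdef, hσudef]
        have h1 : (Equiv.swap fv P₂) (ι (R.rot ((R.rot ^ m) w)))
            = ι (R.rot ((R.rot ^ m) w)) :=
          Equiv.swap_apply_of_ne_of_ne
            (fun h => hwv (by rw [← hfst, h, hfvf]))
            (fun h => hwv (by rw [← hfst, h, hP₂fst]))
        rw [h1]
        exact Equiv.swap_apply_of_ne_of_ne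
          (fun h => hwu (by rw [← hfst, h, heuf]))
          (fun h => hwu (by rw [← hfst, h, hP₁fst]))
      rw [AltHelp.pow_succ_apply, ih w hwu hwv, hval, ← AltHelp.pow_succ_apply]
  -- orbit fullness of the new rotation
  have horb : ∀ d d' : G.Dart, d.fst = d'.fst → ∃ n, (rot' ^ n) d = d' := by
    intro d d' hf
    by_cases hu : d.fst = u
    · by_cases hsent : eu = P₁
      · have h1 : d = P₁ := heusent hsent d hu
        have h2 : d' = P₁ := heusent hsent d' (by rw [← hf]; exact hu)
        exact ⟨0, by rw [h1, h2]; rfl⟩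
      · have heuedge : eu.edge ≠ s(u, v) := heuor.resolve_left hsent
        have hfix : (σv * ρ) P₁ = P₁ := by
          rw [Equiv.Perm.mul_apply, hρP₁, hσvdef]
          exact Equiv.swap_apply_of_ne_of_ne (Ne.symm hfvP₁) hP₁₂
        have hmem : ∀ z : G.Dart, z.fst = u →
            (z = P₁ ∨ z ∈ AltHelp.orbN (σv * ρ) eu) := by
          intro z hz
          by_cases hze : z.edge = s(u, v)
          · rcases hcasesE z hze with rfl | rfl
            · exact Or.inl rfl
            · exact absurd hz huvne.symm
          · right
            obtain ⟨z', rfl⟩ := hsurjι z hze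
            obtain ⟨e', he'⟩ := hsurjι eu heuedge
            have he'fst : e'.fst = u := by rw [← hιfst e', he', heuf]
            have hz'fst : z'.fst = u := hz
            obtain ⟨n, hn⟩ := R.orbit_full e' z' (by rw [he'fst, hz'fst])
            refine ⟨n, ?_⟩
            rw [← he', hkeyu n e' he'fst, hn]
        obtain ⟨n, hn⟩ := AltHelp.insert_orbit (σv * ρ) eu P₁ hsent hfix
          (hmem d hu) (hmem d' (by rw [← hf]; exact hu))
        refine ⟨n, ?_⟩
        have hre : rot' = Equiv.swap eu P₁ * (σv * ρ) := by
          rw [hrot'def, hσudef, mul_assoc]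
        rw [hre]
        exact hn
    · by_cases hv : d.fst = v
      · by_cases hsent : fv = P₂
        · have h1 : d = P₂ := hfvsent hsent d hv
          have h2 : d' = P₂ := hfvsent hsent d' (by rw [← hf]; exact hv)
          exact ⟨0, by rw [h1, h2]; rfl⟩
        · have hfvedge : fv.edge ≠ s(u, v) := hfvor.resolve_left hsent
          have hfix : (σu * ρ) P₂ = P₂ := by
            rw [Equiv.Perm.mul_apply, hρP₂, hσudef]
            exact Equiv.swap_apply_of_ne_of_ne (Ne.symm heuP₂) (Ne.symm hP₁₂)
          have hmem : ∀ z : G.Dart, z.fst = v →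
              (z = P₂ ∨ z ∈ AltHelp.orbN (σu * ρ) fv) := by
            intro z hz
            by_cases hze : z.edge = s(u, v)
            · rcases hcasesE z hze with rfl | rfl
              · exact absurd hz huvne
              · exact Or.inl rfl
            · right
              obtain ⟨z', rfl⟩ := hsurjι z hze
              obtain ⟨f', hf'⟩ := hsurjι fv hfvedge
              have hf'fst : f'.fst = v := by rw [← hιfst f', hf', hfvf]
              have hz'fst : z'.fst = v := hz
              obtain ⟨n, hn⟩ := R.orbit_full f' z' (by rw [hf'fst, hz'fst])
              refine ⟨n, ?_⟩
              rw [← hf', hkeyv n f' hf'fst, hn]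
          obtain ⟨n, hn⟩ := AltHelp.insert_orbit (σu * ρ) fv P₂ hsent hfix
            (hmem d hv) (hmem d' (by rw [← hf]; exact hv))
          refine ⟨n, ?_⟩
          have hre : rot' = Equiv.swap fv P₂ * (σu * ρ) := by
            rw [hrot'def, hcomm, hσvdef, mul_assoc]
          rw [hre]
          exact hn
      · have hde : d.edge ≠ s(u, v) := by
          intro h
          rcases hcasesE d h with rfl | rfl
          · exact hu hP₁fst
          · exact hv hP₂fst
        obtain ⟨z, rfl⟩ := hsurjι d hde
        have hde' : d'.edge ≠ s(u, v) := by
          intro h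
          rcases hcasesE d' h with rfl | rfl
          · exact hu (hf.trans hP₁fst)
          · exact hv (hf.trans hP₂fst)
        obtain ⟨z', rfl⟩ := hsurjι d' hde'
        obtain ⟨n, hn⟩ := R.orbit_full z z' hf
        exact ⟨n, by rw [hkeyw n z hu hv, hn]⟩
  set R' : RotSys G := ⟨rot', hrot'fst, horb⟩ with hR'def
  have hface : R'.facePerm = σu * σv * F₀ := Equiv.ext fun z => rfl
  refine ⟨R', ?_, ?_⟩
  · -- genus bound
    have hEcard : Nat.card G.edgeSet =
        Nat.card (G.deleteEdges {s(u, v)}).edgeSet + 1 := by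
      have hmem : s(u, v) ∈ G.edgeSet := G.mem_edgeSet.2 huv
      rw [SimpleGraph.edgeSet_deleteEdges, Nat.card_coe_set_eq, Nat.card_coe_set_eq]
      exact (Set.ncard_diff_singleton_add_one hmem (Set.toFinite _)).symm
    have hrange1 : P₁ ∉ Set.range ι := by
      rintro ⟨z, hz⟩
      exact hιedge z (by rw [hz]; exact hP₁edge)
    have hrange2 : P₂ ∉ Set.range ι := by
      rintro ⟨z, hz⟩
      exact hιedge z (by rw [hz]; exact hP₂edge)
    -- vertices
    have hVlow : R.numVerts + 2 ≤ Nat.card (MulAction.orbitRel.Quotient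
        (Subgroup.zpowers ρ) G.Dart) :=
      AltHelp.ext_card_add_two_le R.rot ρ ι hιinj hριA P₁ P₂ hrange1 hrange2 hρP₁ hρP₂ hP₁₂
    have hVsw := AltHelp.two_swaps_card ρ eu P₁ fv P₂
    rw [← hσudef, ← hσvdef] at hVsw
    have hVdef : R'.numVerts = Nat.card (MulAction.orbitRel.Quotient
        (Subgroup.zpowers (σu * σv * ρ)) G.Dart) := rfl
    -- faces
    have hFlow : R.numFaces + 1 ≤ Nat.card (MulAction.orbitRel.Quotient
        (Subgroup.zpowers F₀) G.Dart) :=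
      AltHelp.ext_card_add_one_le R.facePerm F₀ ι hιinj hF₀ι P₁ P₂ hrange1 hrange2 hF₀P₁ hF₀P₂
    have hFsw := AltHelp.two_swaps_card F₀ eu P₁ fv P₂
    rw [← hσudef, ← hσvdef] at hFsw
    have hFdef : R'.numFaces = Nat.card (MulAction.orbitRel.Quotient
        (Subgroup.zpowers (σu * σv * F₀)) G.Dart) := by
      show Nat.card (MulAction.orbitRel.Quotient
        (Subgroup.zpowers R'.facePerm) G.Dart) = _
      rw [hface]
    -- components
    set ΓH := Subgroup.closure {R.rot, dartRev (G.deleteEdges {s(u, v)})} with hΓHdef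
    set Γold := Subgroup.closure {ρ, dartRev G} with hΓolddef
    set Γnew := Subgroup.closure {rot', dartRev G} with hΓnewdef
    have hCdef : R'.numComps = Nat.card (MulAction.orbitRel.Quotient Γnew G.Dart) := rfl
    have hρold : ρ ∈ Γold := Subgroup.subset_closure (Set.mem_insert _ _)
    have hrevold : dartRev G ∈ Γold :=
      Subgroup.subset_closure (Set.mem_insert_of_mem _ rfl)
    have hrot'new : rot' ∈ Γnew := Subgroup.subset_closure (Set.mem_insert _ _)
    have hrevnew : dartRev G ∈ Γnew :=
      Subgroup.subset_closure (Set.mem_insert_of_mem _ rfl)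
    have horbtrans : ∀ (Γ : Subgroup (Equiv.Perm G.Dart)) (x' y' z' : G.Dart),
        x' ∈ MulAction.orbit Γ y' → y' ∈ MulAction.orbit Γ z' →
          x' ∈ MulAction.orbit Γ z' := by
      rintro Γ x' y' z' ⟨γ1, rfl⟩ ⟨γ2, rfl⟩
      exact ⟨γ1 * γ2, mul_smul γ1 γ2 z'⟩
    have horbsymm : ∀ (Γ : Subgroup (Equiv.Perm G.Dart)) (x' y' : G.Dart),
        x' ∈ MulAction.orbit Γ y' → y' ∈ MulAction.orbit Γ x' := by
      rintro Γ x' y' ⟨γ1, rfl⟩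
      exact ⟨γ1⁻¹, inv_smul_smul γ1 y'⟩
    have hback : ∀ (d : G.Dart) (h : d.edge ≠ s(u, v)),
        ι ((eqvD G u v).symm ⟨d, h⟩) = d := by
      intro d h
      exact congrArg Subtype.val ((eqvD G u v).apply_symm_apply ⟨d, h⟩)
    -- the separating map for Γold
    set g : G.Dart → (MulAction.orbitRel.Quotient ΓH
        (G.deleteEdges {s(u, v)}).Dart) ⊕ Unit :=
      fun d => if h : d.edge = s(u, v) then Sum.inr () else
        Sum.inl (Quotient.mk'' ((eqvD G u v).symm ⟨d, h⟩)) with hgdef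
    have hgval : ∀ (z : (G.deleteEdges {s(u, v)}).Dart),
        g (ι z) = Sum.inl (Quotient.mk'' z) := by
      intro z
      rw [hgdef]
      dsimp only
      rw [dif_neg (hιedge z)]
      have hz : (eqvD G u v).symm ⟨ι z, hιedge z⟩ = z := by
        rw [Equiv.symm_apply_eq]
        exact Subtype.ext rfl
      rw [hz]
    have hgnew : ∀ d : G.Dart, d.edge = s(u, v) → g d = Sum.inr () := by
      intro d h
      rw [hgdef]
      dsimp only
      rw [dif_pos h]
    have hedgesymm : ∀ d : G.Dart, d.symm.edge = d.edge :=
      fun d => SimpleGraph.Dart.edge_symm d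
    have hgρ : ∀ d, g (ρ d) = g d := by
      intro d
      by_cases h : d.edge = s(u, v)
      · rw [rhoP_new G u v R d h]
      · obtain ⟨z, rfl⟩ := hsurjι d h
        rw [hριA, hgval, hgval]
        refine congrArg Sum.inl ((AltHelp.clqG_eq_iff ΓH _ _).2 ?_)
        exact (AltHelp.mem_orbitG_iff ΓH _ _).2
          ⟨R.rot, Subgroup.subset_closure (Set.mem_insert _ _), rfl⟩
    have hgrev : ∀ d, g ((dartRev G) d) = g d := by
      intro d
      by_cases h : d.edge = s(u, v)
      · rw [hgnew _ h, hgnew _ (by rw [← h]; exact hedgesymm d)]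
      · obtain ⟨z, rfl⟩ := hsurjι d h
        have h2 : (dartRev G) (ι z) = ι z.symm := (iota_symm G u v z).symm
        rw [h2, hgval, hgval]
        refine congrArg Sum.inl ((AltHelp.clqG_eq_iff ΓH _ _).2 ?_)
        exact (AltHelp.mem_orbitG_iff ΓH _ _).2
          ⟨dartRev (G.deleteEdges {s(u, v)}),
            Subgroup.subset_closure (Set.mem_insert_of_mem _ rfl), rfl⟩
    have hgΓ : ∀ γ : Equiv.Perm G.Dart, γ ∈ Γold → ∀ d, g (γ d) = g d := by
      intro γ hγ
      induction hγ using Subgroup.closure_induction with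
      | mem γ' hγ' =>
        rcases Set.mem_insert_iff.1 hγ' with h | h
        · rw [h]; exact hgρ
        · rw [Set.mem_singleton_iff.1 h]; exact hgrev
      | one => intro d; rfl
      | mul γ1 γ2 h1 h2 ih1 ih2 =>
        intro d
        rw [Equiv.Perm.mul_apply, ih1, ih2]
      | inv γ1 h1 ih1 =>
        intro d
        have := ih1 (γ1⁻¹ d)
        rw [Equiv.Perm.apply_inv_self] at this
        exact this.symm
    have hι_orb : ∀ γ : Equiv.Perm (G.deleteEdges {s(u, v)}).Dart, γ ∈ ΓH →
        ∀ z, ι (γ z) ∈ MulAction.orbit Γold (ι z) := by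
      intro γ hγ
      induction hγ using Subgroup.closure_induction with
      | mem γ' hγ' =>
        rcases Set.mem_insert_iff.1 hγ' with h | h
        · rw [h]
          intro z
          exact (AltHelp.mem_orbitG_iff Γold _ _).2 ⟨ρ, hρold, hριA z⟩
        · rw [Set.mem_singleton_iff.1 h]
          intro z
          refine (AltHelp.mem_orbitG_iff Γold _ _).2 ⟨dartRev G, hrevold, ?_⟩
          show (ι z).symm = ι z.symm
          exact (iota_symm G u v z).symm
      | one => intro z; exact MulAction.mem_orbit_self _
      | mul γ1 γ2 h1 h2 ih1 ih2 =>
        intro z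
        have e1 := ih1 (γ2 z)
        have e2 := ih2 z
        exact horbtrans Γold _ _ _ e1 e2
      | inv γ1 h1 ih1 =>
        intro z
        have := ih1 (γ1⁻¹ z)
        rw [Equiv.Perm.apply_inv_self] at this
        exact horbsymm Γold _ _ this
    have hC1 : Nat.card (MulAction.orbitRel.Quotient Γold G.Dart) ≤ R.numComps + 1 := by
      have hfinH : Finite (MulAction.orbitRel.Quotient ΓH
          (G.deleteEdges {s(u, v)}).Dart) := Quotient.finite _
      have hwdg : ∀ x' y' : G.Dart, x' ∈ MulAction.orbit Γold y' → g x' = g y' := by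
        intro x' y' hxy
        obtain ⟨γ, hγ, rfl⟩ := (AltHelp.mem_orbitG_iff Γold _ _).1 hxy
        exact hgΓ γ hγ y'
      have hsepg : ∀ x' y' : G.Dart, g x' = g y' →
          x' ∈ MulAction.orbit Γold y' := by
        intro x' y' hxy
        by_cases hx : x'.edge = s(u, v)
        · by_cases hy : y'.edge = s(u, v)
          · -- both new darts
            have hxx := hcasesE x' hx
            have hyy := hcasesE y' hy
            have hP₂P₁ : (dartRev G) P₂ = P₁ := SimpleGraph.Dart.ext _ _ rfl
            have hP₁P₂' : (dartRev G) P₁ = P₂ := SimpleGraph.Dart.ext _ _ rfl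
            rcases hxx with rfl | rfl <;> rcases hyy with rfl | rfl
            · exact MulAction.mem_orbit_self _
            · exact (AltHelp.mem_orbitG_iff Γold _ _).2 ⟨dartRev G, hrevold, hP₂P₁⟩
            · exact (AltHelp.mem_orbitG_iff Γold _ _).2 ⟨dartRev G, hrevold, hP₁P₂'⟩
            · exact MulAction.mem_orbit_self _
          · rw [hgnew _ hx] at hxy
            obtain ⟨z, rfl⟩ := hsurjι y' hy
            rw [hgval] at hxy
            exact absurd hxy (by simp)
        · by_cases hy : y'.edge = s(u, v)
          · rw [hgnew _ hy] at hxy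
            obtain ⟨z, rfl⟩ := hsurjι x' hx
            rw [hgval] at hxy
            exact absurd hxy (by simp)
          · obtain ⟨z, rfl⟩ := hsurjι x' hx
            obtain ⟨z', rfl⟩ := hsurjι y' hy
            rw [hgval, hgval] at hxy
            have h2 := (AltHelp.clqG_eq_iff ΓH _ _).1 (Sum.inl.inj hxy)
            obtain ⟨γ, hγ, hγz⟩ := (AltHelp.mem_orbitG_iff ΓH _ _).1 h2
            have := hι_orb γ hγ z'
            rw [hγz] at this
            exact this
      have hkey := AltHelp.cardG_le_of_maps Γold g hwdg hsepg
      rw [Nat.card_sum] at hkey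
      have hΓHcard : Nat.card (MulAction.orbitRel.Quotient ΓH
          (G.deleteEdges {s(u, v)}).Dart) = R.numComps := rfl
      simp only [Nat.card_unique] at hkey
      omega
    -- relating old and new component groups
    have hσvP₁ : σv P₁ = P₁ := by
      rw [hσvdef]
      exact Equiv.swap_apply_of_ne_of_ne (Ne.symm hfvP₁) hP₁₂
    have hrot'P₁ : rot' P₁ = eu := by
      rw [happly, hρP₁, hσvP₁, hσudef]
      exact Equiv.swap_apply_right eu P₁
    have hσvP₂ : σv P₂ = fv := by
      rw [hσvdef]
      exact Equiv.swap_apply_right fv P₂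
    have hrot'P₂ : rot' P₂ = fv := by
      rw [happly, hρP₂, hσvP₂, hσudef]
      exact Equiv.swap_apply_of_ne_of_ne (Ne.symm heufv) hfvP₁
    have hσu_orb : ∀ w, σu w ∈ MulAction.orbit Γnew w := by
      intro w
      rcases eq_or_ne w eu with rfl | h1
      · rw [hσudef, Equiv.swap_apply_left]
        refine (AltHelp.mem_orbitG_iff Γnew _ _).2 ⟨rot'⁻¹, inv_mem hrot'new, ?_⟩
        rw [← hrot'P₁, Equiv.Perm.inv_apply_self]
      rcases eq_or_ne w P₁ with rfl | h2
      · rw [hσudef, Equiv.swap_apply_right]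
        exact (AltHelp.mem_orbitG_iff Γnew _ _).2 ⟨rot', hrot'new, hrot'P₁⟩
      · rw [hσudef, Equiv.swap_apply_of_ne_of_ne h1 h2]
        exact MulAction.mem_orbit_self _
    have hσv_orb : ∀ w, σv w ∈ MulAction.orbit Γnew w := by
      intro w
      rcases eq_or_ne w fv with rfl | h1
      · rw [hσvdef, Equiv.swap_apply_left]
        refine (AltHelp.mem_orbitG_iff Γnew _ _).2 ⟨rot'⁻¹, inv_mem hrot'new, ?_⟩
        rw [← hrot'P₂, Equiv.Perm.inv_apply_self]
      rcases eq_or_ne w P₂ with rfl | h2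
      · rw [hσvdef, Equiv.swap_apply_right]
        exact (AltHelp.mem_orbitG_iff Γnew _ _).2 ⟨rot', hrot'new, hrot'P₂⟩
      · rw [hσvdef, Equiv.swap_apply_of_ne_of_ne h1 h2]
        exact MulAction.mem_orbit_self _
    have hρorb : ∀ w, ρ w ∈ MulAction.orbit Γnew w := by
      intro w
      have hρeq : ρ w = σv (σu (rot' w)) := by
        rw [happly, hσudef, hσvdef, Equiv.swap_apply_self, Equiv.swap_apply_self]
      rw [hρeq]
      have e1 : rot' w ∈ MulAction.orbit Γnew w :=
        (AltHelp.mem_orbitG_iff Γnew _ _).2 ⟨rot', hrot'new, rfl⟩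
      exact horbtrans Γnew _ _ _
        (horbtrans Γnew _ _ _ (hσv_orb (σu (rot' w))) (hσu_orb (rot' w))) e1
    have hrelγ : ∀ γ : Equiv.Perm G.Dart, γ ∈ Γold → ∀ w,
        γ w ∈ MulAction.orbit Γnew w := by
      intro γ hγ
      induction hγ using Subgroup.closure_induction with
      | mem γ' hγ' =>
        rcases Set.mem_insert_iff.1 hγ' with h | h
        · rw [h]; exact hρorb
        · rw [Set.mem_singleton_iff.1 h]
          intro w
          exact (AltHelp.mem_orbitG_iff Γnew _ _).2 ⟨dartRev G, hrevnew, rfl⟩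
      | one => intro w; exact MulAction.mem_orbit_self _
      | mul γ1 γ2 h1 h2 ih1 ih2 =>
        intro w
        exact horbtrans Γnew _ _ _ (ih1 (γ2 w)) (ih2 w)
      | inv γ1 h1 ih1 =>
        intro w
        have := ih1 (γ1⁻¹ w)
        rw [Equiv.Perm.apply_inv_self] at this
        exact horbsymm Γnew _ _ this
    have hrel : ∀ x' y' : G.Dart, x' ∈ MulAction.orbit Γold y' →
        x' ∈ MulAction.orbit Γnew y' := by
      intro x' y' hxy
      obtain ⟨γ, hγ, rfl⟩ := (AltHelp.mem_orbitG_iff Γold _ _).1 hxy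
      exact hrelγ γ hγ y'
    have hC2 : R'.numComps ≤ Nat.card (MulAction.orbitRel.Quotient Γold G.Dart) := by
      rw [hCdef]
      exact AltHelp.cardG_le_of_rel Γold Γnew hrel
    have hgwd : ∀ x' y' : G.Dart, x' ∈ MulAction.orbit Γold y' → g x' = g y' := by
      intro x' y' hxy
      obtain ⟨γ, hγ, rfl⟩ := (AltHelp.mem_orbitG_iff Γold _ _).1 hxy
      exact hgΓ γ hγ y'
    have hC3 : (eu ≠ P₁ ∨ fv ≠ P₂) →
        R'.numComps + 1 ≤ Nat.card (MulAction.orbitRel.Quotient Γold G.Dart) := by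
      intro hreal
      rcases hreal with hreal | hreal
      · have heuedge : eu.edge ≠ s(u, v) := heuor.resolve_left hreal
        have hne : P₁ ∉ MulAction.orbit Γold eu := by
          intro hmem
          have := hgwd P₁ eu hmem
          rw [hgnew _ hP₁edge] at this
          obtain ⟨z, rfl⟩ := hsurjι eu heuedge
          rw [hgval] at this
          exact absurd this (by simp)
        have hrel2 : P₁ ∈ MulAction.orbit Γnew eu := by
          refine (AltHelp.mem_orbitG_iff Γnew _ _).2 ⟨rot'⁻¹, inv_mem hrot'new, ?_⟩
          rw [← hrot'P₁, Equiv.Perm.inv_apply_self]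
        rw [hCdef]
        exact AltHelp.cardG_lt_of_rel Γold Γnew hrel P₁ eu hne hrel2
      · have hfvedge : fv.edge ≠ s(u, v) := hfvor.resolve_left hreal
        have hne : P₂ ∉ MulAction.orbit Γold fv := by
          intro hmem
          have := hgwd P₂ fv hmem
          rw [hgnew _ hP₂edge] at this
          obtain ⟨z, rfl⟩ := hsurjι fv hfvedge
          rw [hgval] at this
          exact absurd this (by simp)
        have hrel2 : P₂ ∈ MulAction.orbit Γnew fv := by
          refine (AltHelp.mem_orbitG_iff Γnew _ _).2 ⟨rot'⁻¹, inv_mem hrot'new, ?_⟩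
          rw [← hrot'P₂, Equiv.Perm.inv_apply_self]
        rw [hCdef]
        exact AltHelp.cardG_lt_of_rel Γold Γnew hrel P₂ fv hne hrel2
    -- assemble Euler's inequality
    have hg0 : 2 * R.numComps + Nat.card (G.deleteEdges {s(u, v)}).edgeSet ≤
        2 * k + R.numFaces + R.numVerts := hgen
    show 2 * R'.numComps + Nat.card G.edgeSet ≤ 2 * (k + 1) + R'.numFaces + R'.numVerts
    by_cases h1 : eu = P₁ <;> by_cases h2 : fv = P₂
    · rw [if_pos h1, if_pos h2] at hVsw hFsw
      have hc := hC2.trans hC1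
      omega
    · rw [if_pos h1, if_neg h2] at hVsw hFsw
      have hc := hC3 (Or.inr h2)
      have hc2 := hC1
      omega
    · rw [if_neg h1, if_pos h2] at hVsw hFsw
      have hc := hC3 (Or.inl h1)
      have hc2 := hC1
      omega
    · rw [if_neg h1, if_neg h2] at hVsw hFsw
      have hc := hC3 (Or.inl h1)
      have hc2 := hC1
      omega
  · -- the alternating face survives
    have hp0 : 0 < Function.minimalPeriod ⇑F₀ dd₀ := AltHelp.mp_pos F₀ dd₀
    have hcF : c < Function.minimalPeriod ⇑F₀ dd₀ := by rw [hmp₀]; exact hcp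
    by_cases heuT : eu ∈ T
    · -- splice at u
      have hfvT : fv ∉ T := by
        intro hfvT
        exact hTuv ⟨⟨eu, heuT, heuf⟩, ⟨fv, hfvT, hfvf⟩⟩
      have hFside : fv = P₂ ∨ (fv ∉ AltHelp.orbN F₀ dd₀ ∧ fv ≠ P₁ ∧ fv ≠ P₂) := by
        by_cases h : fv = P₂
        · exact Or.inl h
        · exact Or.inr ⟨hfvT, hfvP₁, h⟩
      obtain ⟨L, j, hL, hjp, hmp', hiter⟩ :=
        AltHelp.build_splice F₀ dd₀ eu P₁ P₂ fv hF₀P₁ hF₀P₂ hP₁₂ hP₁T hP₂T heuT hFside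
      have hpe : Equiv.swap eu P₁ * Equiv.swap fv P₂ * F₀ = R'.facePerm := by
        rw [hface, hσudef, hσvdef]
      rw [hpe] at hmp' hiter
      refine ⟨dd₀, (if a ≤ j then a else a + L), (if b ≤ j then b else b + L),
        (if c ≤ j then c else c + L), ?_, ?_, ?_, ?_, hx1, ?_, ?_, ?_⟩
      · split <;> omega
      · split <;> split <;> omega
      · split <;> split <;> omega
      · rw [hmp']
        split <;> omega
      · rw [hiter a (by omega), hF₀pow a d₀]
        exact hy1
      · rw [hiter b (by omega), hF₀pow b d₀]
        exact hx2
      · rw [hiter c (by omega), hF₀pow c d₀]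
        exact hy2
    · by_cases hfvT : fv ∈ T
      · -- splice at v
        have hEside : eu = P₁ ∨ (eu ∉ AltHelp.orbN F₀ dd₀ ∧ eu ≠ P₂ ∧ eu ≠ P₁) := by
          by_cases h : eu = P₁
          · exact Or.inl h
          · exact Or.inr ⟨heuT, heuP₂, h⟩
        obtain ⟨L, j, hL, hjp, hmp', hiter⟩ :=
          AltHelp.build_splice F₀ dd₀ fv P₂ P₁ eu hF₀P₂ hF₀P₁ (Ne.symm hP₁₂) hP₂T hP₁T
            hfvT hEside
        have hpe : Equiv.swap fv P₂ * Equiv.swap eu P₁ * F₀ = R'.facePerm := by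
          rw [hface, hσudef, hσvdef]
          have hcomm' : Equiv.swap eu P₁ * Equiv.swap fv P₂
              = Equiv.swap fv P₂ * Equiv.swap eu P₁ := by
            rw [← hσudef, ← hσvdef]
            exact hcomm
          rw [← hcomm']
        rw [hpe] at hmp' hiter
        refine ⟨dd₀, (if a ≤ j then a else a + L), (if b ≤ j then b else b + L),
          (if c ≤ j then c else c + L), ?_, ?_, ?_, ?_, hx1, ?_, ?_, ?_⟩
        · split <;> omega
        · split <;> split <;> omega
        · split <;> split <;> omega
        · rw [hmp']
          split <;> omega
        · rw [hiter a (by omega), hF₀pow a d₀]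
          exact hy1
        · rw [hiter b (by omega), hF₀pow b d₀]
          exact hx2
        · rw [hiter c (by omega), hF₀pow c d₀]
          exact hy2
      · -- neither insertion dart is on the alternating face
        have hagree : ∀ z, z ∈ AltHelp.orbN F₀ dd₀ → (σu * σv * F₀) z = F₀ z := by
          intro z hz
          have hz2 : F₀ z ∈ T := AltHelp.orbN_apply_mem F₀ hz
          have hn1 : F₀ z ≠ fv := fun h => hfvT (h ▸ hz2)
          have hn2 : F₀ z ≠ P₂ := fun h => hP₂T (h ▸ hz2)
          have hn3 : F₀ z ≠ eu := fun h => heuT (h ▸ hz2)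
          have hn4 : F₀ z ≠ P₁ := fun h => hP₁T (h ▸ hz2)
          show σu (σv (F₀ z)) = F₀ z
          rw [hσvdef, Equiv.swap_apply_of_ne_of_ne hn1 hn2, hσudef,
            Equiv.swap_apply_of_ne_of_ne hn3 hn4]
        have hit := AltHelp.eq_iter_of_eqOn F₀ (σu * σv * F₀) dd₀ hagree
        have hmp' : Function.minimalPeriod ⇑(σu * σv * F₀) dd₀
            = Function.minimalPeriod ⇑F₀ dd₀ := AltHelp.mp_eq_of_pow_eq hit
        have hpe : σu * σv * F₀ = R'.facePerm := hface.symm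
        rw [hpe] at hmp' hit
        refine ⟨dd₀, a, b, c, ha, hab, hbc, ?_, hx1, ?_, ?_, ?_⟩
        · rw [hmp']
          exact hcF
        · rw [hit a, hF₀pow a d₀]
          exact hy1
        · rw [hit b, hF₀pow b d₀]
          exact hx2
        · rw [hit c, hF₀pow c d₀]
          exact hy2

end Main
end AltPaper

open AltPaper in
/-- second half of Lemma lm-alt-jump: If `G` is an obstruction for the
orientable surface of genus `k` and, for every edge `uv`, the graph `G - uv` has an
embedding of genus at most `k` with an `xy`-alternating face in which `u` and `v` are not
cofacial, then `G` has an embedding of genus at most `k + 1` with an `xy`-alternating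
face. -/
theorem statement_15 {V : Type*} [Fintype V] (G : SimpleGraph V) (x y : V) (k : ℕ)
    (hobs : ¬ GenusLE G k ∧ ∀ e ∈ G.edgeSet, GenusLE (G.deleteEdges {e}) k)
    (hPi : ∀ u v : V, G.Adj u v →
      ∃ R : RotSys (G.deleteEdges {s(u, v)}), R.genusLE k ∧ R.altFace x y ∧
        ¬ R.Cofacial u v) :
    AltEmb G x y (k + 1) := by
  classical
  by_cases hedge : ∃ u v : V, G.Adj u v
  · obtain ⟨u, v, huv⟩ := hedge
    obtain ⟨R, hgen, halt, hcof⟩ := hPi u v huv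
    exact AltPaper.main_construct G x y u v k huv R hgen halt hcof
  · exact absurd (AltPaper.genusLE_of_no_edge G k (fun a b h => hedge ⟨a, b, h⟩)) hobs.1
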